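/- arXiv:1411.4092 — 3 statements merged into one kernel-verified Lean document; each statement's English description precedes it below -/
import Mathlib

section
/- For odd b ≥ 3 and a coprime to b, (-1)^{inv(a,b)} equals the Jacobi symbol (a/b). (Zolotarev's theorem: the sign of the permutation x ↦ a·x mod b equals the Jacobi symbol.) -/
/-- The sawtooth function ((x)): 0 if x is an integer, else x - ⌊x⌋ - 1/2. -/
def sawtooth (x : ℚ) : ℚ := if x.den = 1 then 0 else x - ⌊x⌋ - 1/2

/-- The Dedekind sum s(a,b) = ∑_{i=1}^{b-1} (i/b)·((a·i/b)). -/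
def dedekindSum (a b : ℕ) : ℚ :=
  ∑ i ∈ Finset.Icc 1 (b - 1), (i : ℚ) / (b : ℚ) * sawtooth ((a * i : ℕ) / (b : ℚ))

/-- Representative of a·x mod b in {1, ..., b}. -/
def modRep (a b x : ℕ) : ℕ := if a * x % b = 0 then b else a * x % b

/-- inv(a,b): number of pairs 1 ≤ i < j ≤ b with a·i mod b > a·j mod b
(representatives in {1,...,b}). -/
def invNum (a b : ℕ) : ℕ :=
  ((Finset.Icc 1 b ×ˢ Finset.Icc 1 b).filter
    (fun p => p.1 < p.2 ∧ modRep a b p.2 < modRep a b p.1)).card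

open Equiv Equiv.Perm Finset



/-- helper: parity-equal exponents give equal powers of -1 -/
private lemma negOnePowPar {M : Type*} [Monoid M] [HasDistribNeg M] {a b : ℕ}
    (h : a % 2 = b % 2) : (-1 : M) ^ a = (-1 : M) ^ b := by
  conv_lhs => rw [← Nat.mod_add_div a 2, pow_add, pow_mul, neg_one_sq, one_pow, mul_one]
  conv_rhs => rw [← Nat.mod_add_div b 2, pow_add, pow_mul, neg_one_sq, one_pow, mul_one]
  rw [h]

private lemma unitsPowOdd (x : ℤˣ) {t : ℕ} (ht : Odd t) : x ^ t = x := by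
  rcases Int.units_eq_one_or x with h | h <;> simp [h, ht.neg_one_pow]

private theorem signAux_eq_sign {n : ℕ} (f : Perm (Fin n)) : signAux f = sign f := by
  refine Equiv.Perm.swap_induction_on f ?_ ?_
  · rw [signAux_one, map_one]
  · intro f x y hxy ih
    rw [signAux_mul, signAux_swap hxy, map_mul, sign_swap hxy, ih]

private theorem sign_eq_neg_one_pow {n : ℕ} (f : Perm (Fin n)) :
    sign f = (-1 : ℤˣ) ^ ((finPairsLT n).filter (fun x => f x.1 ≤ f x.2)).card := by
  rw [← signAux_eq_sign]
  unfold signAux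
  rw [Finset.prod_ite, Finset.prod_const, Finset.prod_const, one_pow, mul_one]



/-- explicit coset decomposition for commutative groups -/
private noncomputable def cosetEquiv {G : Type*} [CommGroup G] (H : Subgroup G) :
    G ≃ (G ⧸ H) × H where
  toFun g := (QuotientGroup.mk g, ⟨(Quotient.out (QuotientGroup.mk g : G ⧸ H))⁻¹ * g, by
      rw [← QuotientGroup.eq]; exact QuotientGroup.out_eq' _⟩)
  invFun p := Quotient.out p.1 * p.2
  left_inv g := by simp
  right_inv := by
    rintro ⟨q, h, hh⟩
    have h1 : (QuotientGroup.mk (Quotient.out q * h) : G ⧸ H) = q := by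
      rw [QuotientGroup.mk_mul_of_mem _ hh, QuotientGroup.out_eq']
    refine Prod.ext h1 (Subtype.ext ?_)
    simp only [h1]
    group

private lemma cosetEquiv_mul {G : Type*} [CommGroup G] (H : Subgroup G) (u g : G) (hu : u ∈ H) :
    cosetEquiv H (u * g) = ((cosetEquiv H g).1, ⟨u, hu⟩ * (cosetEquiv H g).2) := by
  have h1 : (QuotientGroup.mk (u * g) : G ⧸ H) = QuotientGroup.mk g := by
    rw [mul_comm, QuotientGroup.mk_mul_of_mem _ hu]
  refine Prod.ext h1 (Subtype.ext ?_)
  simp only [cosetEquiv, Equiv.coe_fn_mk, h1, Submonoid.mk_mul_mk]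
  simp [mul_left_comm]

private theorem isCycle_mulLeft {G : Type*} [Group G] (u : G) (hu : u ≠ 1)
    (hgen : ∀ x : G, x ∈ Subgroup.zpowers u) : IsCycle (Equiv.mulLeft u) := by
  refine ⟨1, by simpa using hu, fun y _ => ?_⟩
  obtain ⟨k, hk⟩ := hgen y
  exact ⟨k, by simp [Equiv.zpow_mulLeft, hk]⟩

private theorem sign_mulLeft_gen {G : Type*} [Group G] [Fintype G] [DecidableEq G] (u : G)
    (hu : u ≠ 1) (hgen : ∀ x : G, x ∈ Subgroup.zpowers u) :
    sign (Equiv.mulLeft u) = -(-1 : ℤˣ) ^ Fintype.card G := by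
  have hc := isCycle_mulLeft u hu hgen
  have hs : (Equiv.mulLeft u).support = Finset.univ := by
    ext x
    simp only [Finset.mem_univ, iff_true, Equiv.Perm.mem_support, Equiv.coe_mulLeft]
    intro h
    exact hu (mul_eq_right.mp h)
  rw [hc.sign, hs, Finset.card_univ]

private theorem sign_mulLeft_even {G : Type*} [CommGroup G] [Fintype G] [DecidableEq G]
    (hG : Even (Fintype.card G)) (u : G) :
    sign (Equiv.mulLeft u) = (-1 : ℤˣ) ^ (Fintype.card G / orderOf u) := by
  classical
  rcases eq_or_ne u 1 with rfl | hu
  · rw [Equiv.mulLeft_one, map_one, orderOf_one, Nat.div_one, hG.neg_one_pow]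
  · set H := Subgroup.zpowers u with hH
    have hmem : u ∈ H := Subgroup.mem_zpowers u
    set u' : H := ⟨u, hmem⟩ with hu'
    letI : Fintype (G ⧸ H) := Fintype.ofFinite _
    letI : DecidableEq (G ⧸ H) := Classical.decEq _
    have key : sign (Equiv.mulLeft u) =
        sign (Equiv.prodCongrRight (fun _ : G ⧸ H => Equiv.mulLeft u')) := by
      refine Equiv.Perm.sign_eq_sign_of_equiv _ _ (cosetEquiv H) fun g => ?_
      rw [Equiv.coe_mulLeft, cosetEquiv_mul H u g hmem]
      rfl
    rw [key, Equiv.Perm.sign_prodCongrRight, Finset.prod_const, Finset.card_univ]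
    have hgen : ∀ x : H, x ∈ Subgroup.zpowers u' := by
      rintro ⟨x, hx⟩
      obtain ⟨k, hk⟩ := hx
      exact ⟨k, Subtype.ext (by simpa using hk)⟩
    have hu'1 : u' ≠ 1 := fun h => hu (by simpa [hu'] using congrArg Subtype.val h)
    have hcardH : Fintype.card H = orderOf u := Fintype.card_zpowers
    rw [sign_mulLeft_gen u' hu'1 hgen, hcardH]
    have hlag : Fintype.card G = Fintype.card (G ⧸ H) * orderOf u := by
      have := Subgroup.card_eq_card_quotient_mul_card_subgroup H
      simpa [Nat.card_eq_fintype_card, hcardH] using this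
    have hdpos : 0 < orderOf u := orderOf_pos u
    have hq : Fintype.card G / orderOf u = Fintype.card (G ⧸ H) := by
      rw [hlag, Nat.mul_div_cancel _ hdpos]
    rw [hq]
    have step : (-(-1 : ℤˣ) ^ orderOf u) ^ Fintype.card (G ⧸ H) =
        (-1 : ℤˣ) ^ ((orderOf u + 1) * Fintype.card (G ⧸ H)) := by
      rw [pow_mul]
      congr 1
      rw [pow_succ, mul_neg_one]
    rw [step]
    refine negOnePowPar ?_
    have h2 : (orderOf u + 1) * Fintype.card (G ⧸ H) =
        Fintype.card G + Fintype.card (G ⧸ H) := by rw [add_mul, one_mul, mul_comm, ← hlag]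
    obtain ⟨s, hse⟩ := hG
    omega



private theorem sign_split {α : Type*} [Fintype α] [DecidableEq α] (σ : Perm α)
    (p : α → Prop) [DecidablePred p] (h : ∀ x, p x ↔ p (σ x)) :
    sign σ = sign (σ.subtypePerm (fun x => (h x).symm)) *
      sign (σ.subtypePerm (fun x => not_congr (h x).symm) : Perm {x // ¬ p x}) := by
  letI : DecidablePred (fun x => ¬ p x) := fun x => instDecidableNot
  have hσ : σ = Equiv.Perm.ofSubtype (σ.subtypePerm (fun x => (h x).symm)) *
      Equiv.Perm.ofSubtype (σ.subtypePerm (p := fun x => ¬ p x) (fun x => not_congr (h x).symm)) := by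
    ext x
    rw [Equiv.Perm.mul_apply]
    by_cases hx : p x
    · have e1 : (Equiv.Perm.ofSubtype (σ.subtypePerm (p := fun x => ¬ p x) (fun x => not_congr (h x).symm))) x = x :=
        Equiv.Perm.ofSubtype_apply_of_not_mem
          (σ.subtypePerm (p := fun x => ¬ p x) (fun x => not_congr (h x).symm)) (not_not_intro hx)
      rw [e1, Equiv.Perm.ofSubtype_apply_of_mem (σ.subtypePerm (fun x => (h x).symm)) hx]
      rfl
    · have hns : ¬ p (σ x) := fun hc => hx ((h x).mpr hc)
      have e1 : (Equiv.Perm.ofSubtype (σ.subtypePerm (p := fun x => ¬ p x) (fun x => not_congr (h x).symm))) x = σ x := by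
        rw [Equiv.Perm.ofSubtype_apply_of_mem
          (σ.subtypePerm (p := fun x => ¬ p x) (fun x => not_congr (h x).symm)) hx]
        rfl
      rw [e1, Equiv.Perm.ofSubtype_apply_of_not_mem (σ.subtypePerm (fun x => (h x).symm)) hns]
  conv_lhs => rw [hσ]
  rw [map_mul, Equiv.Perm.sign_ofSubtype, Equiv.Perm.sign_ofSubtype]

/-- For an odd prime p and unit w, the Legendre symbol of w equals (-1)^((p-1)/ord w). -/
private theorem legendre_eq_pow_orderOf (p : ℕ) [hp : Fact p.Prime] (hp2 : p ≠ 2)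
    (w : (ZMod p)ˣ) :
    legendreSym p (((w : ZMod p).val : ℤ)) = (-1 : ℤ) ^ ((p - 1) / orderOf w) := by
  have hp3 : 3 ≤ p := by
    rcases hp.out.two_le.lt_or_eq with h | h
    · omega
    · omega
  obtain ⟨g, hg⟩ := IsCyclic.exists_generator (α := (ZMod p)ˣ)
  have hog : orderOf g = p - 1 := by
    rw [orderOf_eq_card_of_forall_mem_zpowers hg, Nat.card_eq_fintype_card, ZMod.card_units]
  obtain ⟨t, ht⟩ : ∃ t : ℕ, g ^ t = w := by
    have := hg w
    rwa [← mem_powers_iff_mem_zpowers, Submonoid.mem_powers_iff] at this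
  -- Legendre of w = (-1)^t
  have hq : ∀ v : (ZMod p)ˣ, legendreSym p (((v : ZMod p).val : ℤ)) =
      quadraticChar (ZMod p) (v : ZMod p) := by
    intro v
    rw [legendreSym]
    congr 1
    push_cast
    exact ZMod.natCast_rightInverse _
  have hgns : ¬ IsSquare ((g : ZMod p)) := by
    rintro ⟨y, hy⟩
    have hy0 : y ≠ 0 := by
      rintro rfl
      exact (g.ne_zero) (by simpa using hy)
    obtain ⟨r, hr⟩ : Even (p - 1) := Nat.Odd.sub_odd (hp.out.odd_of_ne_two hp2) odd_one
    have hrpos : 0 < r := by omega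
    set y' : (ZMod p)ˣ := Units.mk0 y hy0 with hy'
    have hgy : g = y' * y' := Units.ext (by rw [hy', Units.val_mul, Units.val_mk0]; exact hy)
    have h1 : g ^ r = 1 := by
      rw [hgy, mul_pow, ← pow_add, ← hr, ← ZMod.card_units p, pow_card_eq_one]
    have := orderOf_dvd_of_pow_eq_one h1
    rw [hog] at this
    have := Nat.le_of_dvd hrpos this
    omega
  have hchi : quadraticChar (ZMod p) (g : ZMod p) = -1 :=
    (quadraticChar_neg_one_iff_not_isSquare).mpr hgns
  have hrhs : legendreSym p (((w : ZMod p).val : ℤ)) = (-1 : ℤ) ^ t := by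
    rw [hq, ← ht, Units.val_pow_eq_pow_val, map_pow, hchi]
  -- orderOf w and gcd
  have how : orderOf w = (p - 1) / Nat.gcd (p - 1) t := by
    rw [← ht, orderOf_pow, hog]
  have hgcd_dvd : Nat.gcd (p - 1) t ∣ p - 1 := Nat.gcd_dvd_left _ _
  have hfrac : (p - 1) / orderOf w = Nat.gcd (p - 1) t := by
    rw [how, Nat.div_div_self hgcd_dvd (by omega)]
  rw [hrhs, hfrac]
  refine (negOnePowPar ?_).symm
  have hev : 2 ∣ (p - 1) := by
    have := hp.out.odd_of_ne_two hp2
    obtain ⟨s, hs⟩ := this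
    omega
  rcases Nat.even_or_odd t with he | ho
  · have h2 : 2 ∣ t := he.two_dvd
    have h1 : 2 ∣ Nat.gcd (p - 1) t := Nat.dvd_gcd hev h2
    omega
  · rw [Nat.odd_iff] at ho
    have h1 : ¬ (2 ∣ Nat.gcd (p - 1) t) := fun hc => by
      have h2 := hc.trans (Nat.gcd_dvd_right (p-1) t)
      omega
    omega


private lemma negOnePowOddM {M : Type*} [Monoid M] [HasDistribNeg M] {t : ℕ} (ht : Odd t) :
    (-1 : M) ^ t = -1 := ht.neg_one_pow

private theorem ppUnitsPart (p k : ℕ) [hp : Fact p.Prime] (hp2 : p ≠ 2) (hk : 0 < k)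
    [NeZero (p ^ k)] (u : (ZMod (p ^ k))ˣ) :
    (-1 : ℤ) ^ (Fintype.card (ZMod (p ^ k))ˣ / orderOf u) =
      jacobiSym (((u : ZMod (p ^ k)).val : ℤ)) p := by
  haveI : NeZero p := ⟨hp.out.pos.ne'⟩
  set w : (ZMod p)ˣ := ZMod.unitsMap (dvd_pow_self p hk.ne') u with hw
  set d := orderOf u with hd
  set d₀ := orderOf w with hd₀
  have hd₀pos : 0 < d₀ := orderOf_pos w
  have hdpos : 0 < d := orderOf_pos u
  have hd₀d : d₀ ∣ d := orderOf_map_dvd _ u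
  -- the kernel of unitsMap has cardinality p^(k-1)
  have hcard : Fintype.card (ZMod (p ^ k))ˣ = p ^ (k - 1) * (p - 1) := by
    rw [ZMod.card_units_eq_totient, Nat.totient_prime_pow hp.out hk]
  have hkercard : Nat.card (ZMod.unitsMap (dvd_pow_self p hk.ne' : p ∣ p ^ k)).ker
      = p ^ (k - 1) := by
    have hsurj := ZMod.unitsMap_surjective (dvd_pow_self p hk.ne' : p ∣ p ^ k)
    have hquot := Nat.card_congr
      (QuotientGroup.quotientKerEquivOfSurjective _ hsurj).toEquiv
    have hlag := Subgroup.card_eq_card_quotient_mul_card_subgroup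
      (ZMod.unitsMap (dvd_pow_self p hk.ne' : p ∣ p ^ k)).ker
    rw [hquot] at hlag
    have hcards : Nat.card (ZMod p)ˣ = p - 1 := by
      rw [Nat.card_eq_fintype_card, ZMod.card_units]
    rw [hcards, Nat.card_eq_fintype_card, hcard] at hlag
    have hppos : 0 < p - 1 := by have := hp.out.two_le; omega
    exact (Nat.eq_of_mul_eq_mul_left hppos (by linarith [hlag])).symm
  -- u ^ (d₀ * p^(k-1)) = 1
  have hker1 : u ^ d₀ ∈ (ZMod.unitsMap (dvd_pow_self p hk.ne' : p ∣ p ^ k)).ker := by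
    rw [MonoidHom.mem_ker, map_pow]
    exact pow_orderOf_eq_one w
  have hpow : u ^ (d₀ * p ^ (k - 1)) = 1 := by
    have h2 : (⟨u ^ d₀, hker1⟩ : (ZMod.unitsMap (dvd_pow_self p hk.ne' : p ∣ p ^ k)).ker) ^
        (p ^ (k - 1)) = 1 := by
      rw [← hkercard]
      exact pow_card_eq_one'
    have h3 := congrArg Subtype.val h2
    rw [SubmonoidClass.coe_pow] at h3
    rw [pow_mul]
    simpa using h3
  have hddvd : d ∣ d₀ * p ^ (k - 1) := orderOf_dvd_of_pow_eq_one hpow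
  have hc : d₀ * (d / d₀) = d := Nat.mul_div_cancel' hd₀d
  set c := d / d₀ with hcdef
  have hcp : c ∣ p ^ (k - 1) := by
    have : d₀ * c ∣ d₀ * p ^ (k - 1) := by rw [hc]; exact hddvd
    exact (Nat.mul_dvd_mul_iff_left hd₀pos).mp this
  obtain ⟨j, hjle, hcj⟩ := (Nat.dvd_prime_pow hp.out).mp hcp
  have hd₀p1 : d₀ ∣ p - 1 := by
    have := orderOf_dvd_card (x := w)
    rwa [ZMod.card_units] at this
  -- m / d = p^(k-1-j) * ((p-1)/d₀)
  have hmd : Fintype.card (ZMod (p ^ k))ˣ = d * (p ^ (k - 1 - j) * ((p - 1) / d₀)) := by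
    have e1 : p ^ j * p ^ (k - 1 - j) = p ^ (k - 1) := by
      rw [← pow_add]
      congr 1
      omega
    have e2 : d₀ * ((p - 1) / d₀) = p - 1 := Nat.mul_div_cancel' hd₀p1
    calc Fintype.card (ZMod (p ^ k))ˣ = p ^ (k - 1) * (p - 1) := hcard
    _ = (p ^ j * p ^ (k - 1 - j)) * (d₀ * ((p - 1) / d₀)) := by rw [e1, e2]
    _ = (d₀ * p ^ j) * (p ^ (k - 1 - j) * ((p - 1) / d₀)) := by ring
    _ = d * (p ^ (k - 1 - j) * ((p - 1) / d₀)) := by rw [← hcj, hc]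
  have hdiv : Fintype.card (ZMod (p ^ k))ˣ / d = p ^ (k - 1 - j) * ((p - 1) / d₀) := by
    rw [hmd, Nat.mul_div_cancel_left _ hdpos]
  rw [hdiv, pow_mul, negOnePowOddM (Odd.pow (hp.out.odd_of_ne_two hp2)),
    ← legendre_eq_pow_orderOf p hp2 w, jacobiSym.legendreSym.to_jacobiSym]
  -- finally, w.val relates to u.val mod p
  have hwval : (w : ZMod p) = (((u : ZMod (p ^ k)).val : ℕ) : ZMod p) := by
    rw [hw, ZMod.unitsMap_def, Units.coe_map]
    simp only [MonoidHom.coe_coe, ZMod.castHom_apply]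
    rw [ZMod.natCast_val]
  rw [hwval, ZMod.val_natCast]
  rw [jacobiSym.mod_left (((u : ZMod (p ^ k)).val : ℤ)) p]
  push_cast
  ring_nf


private theorem pp_step (p k : ℕ) [hp : Fact p.Prime] (hp2 : p ≠ 2) (hk : 0 < k)
    [NeZero (p ^ k)] [NeZero (p ^ (k - 1))] (u : (ZMod (p ^ k))ˣ)
    (Hrec : ∀ v : (ZMod (p ^ (k - 1)))ˣ,
      ((sign (MulAction.toPerm v : Perm (ZMod (p ^ (k - 1)))) : ℤˣ) : ℤ) =
        jacobiSym (((v : ZMod (p ^ (k - 1))).val : ℤ)) (p ^ (k - 1))) :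
    ((sign (MulAction.toPerm u : Perm (ZMod (p ^ k))) : ℤˣ) : ℤ) =
      jacobiSym (((u : ZMod (p ^ k)).val : ℤ)) (p ^ k) := by
  classical
  haveI : NeZero p := ⟨hp.out.pos.ne'⟩
  have hp3 : 3 ≤ p := by have h2 := hp.out.two_le; omega
  have hpk3 : 2 < p ^ k := by
    calc 2 < p := by omega
    _ ≤ p ^ k := Nat.le_self_pow hk.ne' p
  -- the permutation preserves units
  have hpres : ∀ x : ZMod (p ^ k), IsUnit x ↔ IsUnit ((MulAction.toPerm u : Perm (ZMod (p ^ k))) x) := by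
    intro x
    rw [MulAction.toPerm_apply, Units.smul_def, smul_eq_mul, Units.isUnit_units_mul]
  rw [sign_split (MulAction.toPerm u : Perm (ZMod (p ^ k))) _ hpres]
  -- units part
  set A := (MulAction.toPerm u : Perm (ZMod (p ^ k))).subtypePerm (fun x => (hpres x).symm) with hA
  have hunits : sign A = sign (Equiv.mulLeft u) := by
    refine Equiv.Perm.sign_eq_sign_of_equiv _ _
      ⟨fun x => x.2.unit, fun v => ⟨v, v.isUnit⟩,
        fun x => Subtype.ext x.2.unit_spec, fun v => Units.ext (IsUnit.unit_spec _)⟩ ?_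
    intro x
    refine Units.ext ?_
    simp only [Equiv.coe_fn_mk, Units.val_mul, IsUnit.unit_spec, Equiv.coe_mulLeft, hA,
      Equiv.Perm.subtypePerm_apply, MulAction.toPerm_apply, Units.smul_def, smul_eq_mul]
  -- nonunits part
  set B := (MulAction.toPerm u : Perm (ZMod (p ^ k))).subtypePerm
    (p := fun x => ¬ IsUnit x) (fun x => not_congr (hpres x).symm) with hB
  set u' : (ZMod (p ^ (k - 1)))ˣ := ZMod.unitsMap (pow_dvd_pow p (by omega : k - 1 ≤ k)) u
    with hu'
  have hu'c : (u' : ZMod (p ^ (k - 1))) = (((u : ZMod (p ^ k)).val : ℕ) : ZMod (p ^ (k - 1))) := by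
    rw [hu', ZMod.unitsMap_def, Units.coe_map]
    simp only [MonoidHom.coe_coe, ZMod.castHom_apply]
    rw [ZMod.natCast_val]
  have hppk : p * p ^ (k - 1) = p ^ k := by
    rw [← pow_succ']
    congr 1
    omega
  -- the equivalence between ZMod p^(k-1) and nonunits of ZMod p^k
  have hnu : ∀ y : ZMod (p ^ k), ¬ IsUnit y ↔ p ∣ y.val := by
    intro y
    constructor
    · intro hy
      by_contra hnd
      apply hy
      have : Nat.Coprime y.val (p ^ k) :=
        Nat.Coprime.pow_right k (((Nat.Prime.coprime_iff_not_dvd hp.out).mpr hnd).symm)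
      have := (ZMod.isUnit_iff_coprime y.val (p ^ k)).mpr this
      rwa [ZMod.natCast_rightInverse y] at this
    · intro ⟨c, hc⟩ hy
      rw [← ZMod.natCast_rightInverse y] at hy
      rw [ZMod.isUnit_iff_coprime] at hy
      have h1 : p ∣ Nat.gcd y.val (p ^ k) :=
        Nat.dvd_gcd ⟨c, hc⟩ (dvd_pow_self p hk.ne')
      have h2 : Nat.gcd y.val (p ^ k) = 1 := hy
      rw [h2] at h1
      have h3 := Nat.dvd_one.mp h1
      omega
  let φf : ZMod (p ^ (k - 1)) → {x : ZMod (p ^ k) // ¬ IsUnit x} := fun x =>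
    ⟨((p * x.val : ℕ) : ZMod (p ^ k)), by
      rw [hnu, ZMod.val_natCast]
      exact Nat.dvd_mod_iff ((dvd_pow_self p hk.ne')) |>.mpr ⟨x.val, rfl⟩⟩
  have hφinj : Function.Injective φf := by
    intro x y hxy
    have h1 : ((p * x.val : ℕ) : ZMod (p ^ k)) = ((p * y.val : ℕ) : ZMod (p ^ k)) :=
      congrArg Subtype.val hxy
    rw [ZMod.natCast_eq_natCast_iff] at h1
    have h2 : x.val ≡ y.val [MOD p ^ (k - 1)] := by
      have hd := (Nat.modEq_iff_dvd).mp h1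
      rw [← hppk] at hd
      push_cast at hd
      have hd' : (p : ℤ) * ((y.val : ℤ) - (x.val : ℤ)) = (p : ℤ) * (y.val : ℤ) - (p : ℤ) * (x.val : ℤ) := by ring
      rw [← hd'] at hd
      have hd2 := (mul_dvd_mul_iff_left (show (p : ℤ) ≠ 0 by exact_mod_cast hp.out.pos.ne')).mp hd
      rw [Nat.modEq_iff_dvd]
      push_cast
      exact hd2
    have h3 : (x.val : ZMod (p ^ (k - 1))) = (y.val : ZMod (p ^ (k - 1))) := by
      rwa [ZMod.natCast_eq_natCast_iff]
    rwa [ZMod.natCast_rightInverse x, ZMod.natCast_rightInverse y] at h3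
  have hφsurj : Function.Surjective φf := by
    rintro ⟨y, hy⟩
    obtain ⟨c, hc⟩ := (hnu y).mp hy
    have hclt : c < p ^ (k - 1) := by
      have h1 : y.val < p ^ k := ZMod.val_lt y
      rw [hc, ← hppk] at h1
      exact lt_of_mul_lt_mul_left h1 (Nat.zero_le p)
    refine ⟨(c : ZMod (p ^ (k - 1))), Subtype.ext ?_⟩
    show ((p * (ZMod.val ((c : ℕ) : ZMod (p ^ (k - 1)))) : ℕ) : ZMod (p ^ k)) = y
    rw [ZMod.val_natCast, Nat.mod_eq_of_lt hclt, ← hc]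
    exact ZMod.natCast_rightInverse y
  have hφcomm : ∀ x : ZMod (p ^ (k - 1)),
      φf ((MulAction.toPerm u' : Perm (ZMod (p ^ (k - 1)))) x) = B (φf x) := by
    intro x
    refine Subtype.ext ?_
    show ((p * ((u' • x).val) : ℕ) : ZMod (p ^ k)) =
      (MulAction.toPerm u : Perm (ZMod (p ^ k))) ((p * x.val : ℕ) : ZMod (p ^ k))
    rw [MulAction.toPerm_apply, Units.smul_def, Units.smul_def, smul_eq_mul, smul_eq_mul]
    have hval : (u' * x : ZMod (p ^ (k - 1))).val ≡
        (u : ZMod (p ^ k)).val * x.val [MOD p ^ (k - 1)] := by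
      have : (u' * x : ZMod (p ^ (k - 1))) =
          (((u : ZMod (p ^ k)).val * x.val : ℕ) : ZMod (p ^ (k - 1))) := by
        rw [Nat.cast_mul, hu'c, ZMod.natCast_rightInverse x]
      rw [this, ZMod.val_natCast]
      exact Nat.mod_modEq _ _
    have h2 : p * (u' * x : ZMod (p ^ (k - 1))).val ≡
        p * ((u : ZMod (p ^ k)).val * x.val) [MOD p ^ k] := by
      have := Nat.ModEq.mul_left' p hval
      rwa [hppk] at this
    have h3 : ((p * (u' * x : ZMod (p ^ (k - 1))).val : ℕ) : ZMod (p ^ k)) =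
        ((p * ((u : ZMod (p ^ k)).val * x.val) : ℕ) : ZMod (p ^ k)) := by
      rwa [ZMod.natCast_eq_natCast_iff]
    refine h3.trans ?_
    push_cast
    rw [ZMod.natCast_val, ZMod.cast_id]
    ring
  have hnonunits : sign B =
      sign (MulAction.toPerm u' : Perm (ZMod (p ^ (k - 1)))) := by
    refine (Equiv.Perm.sign_eq_sign_of_equiv _ _ (Equiv.ofBijective φf ⟨hφinj, hφsurj⟩) ?_).symm
    intro x
    exact hφcomm x
  -- assemble
  have hcardeven : Even (Fintype.card (ZMod (p ^ k))ˣ) := by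
    rw [ZMod.card_units_eq_totient]
    exact Nat.totient_even hpk3
  rw [hunits, hnonunits, sign_mulLeft_even hcardeven u]
  push_cast
  rw [Hrec u', ppUnitsPart p k hp2 hk u]
  have hjac : jacobiSym (((u' : ZMod (p ^ (k - 1))).val : ℤ)) (p ^ (k - 1)) =
      jacobiSym (((u : ZMod (p ^ k)).val : ℤ)) (p ^ (k - 1)) := by
    rw [hu'c, ZMod.val_natCast]
    conv_rhs => rw [jacobiSym.mod_left]
    congr 1
  rw [hjac, ← jacobiSym.mul_right _ p (p ^ (k - 1)), hppk]


private lemma unitsPowOddEq (x : ℤˣ) {t : ℕ} (ht : Odd t) : x ^ t = x := by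
  rcases Int.units_eq_one_or x with h | h <;> simp [h, ht.neg_one_pow]

private theorem crt_step (n₁ n₂ : ℕ) [NeZero n₁] [NeZero n₂] (hco : n₁.Coprime n₂)
    (h₁ : Odd n₁) (h₂ : Odd n₂) (u : (ZMod (n₁ * n₂))ˣ)
    (H₁ : ∀ v : (ZMod n₁)ˣ, ((sign (MulAction.toPerm v : Perm (ZMod n₁)) : ℤˣ) : ℤ) =
      jacobiSym (((v : ZMod n₁).val : ℤ)) n₁)
    (H₂ : ∀ v : (ZMod n₂)ˣ, ((sign (MulAction.toPerm v : Perm (ZMod n₂)) : ℤˣ) : ℤ) =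
      jacobiSym (((v : ZMod n₂).val : ℤ)) n₂) :
    ((sign (MulAction.toPerm u : Perm (ZMod (n₁ * n₂))) : ℤˣ) : ℤ) =
      jacobiSym (((u : ZMod (n₁ * n₂)).val : ℤ)) (n₁ * n₂) := by
  haveI : NeZero (n₁ * n₂) := ⟨Nat.mul_ne_zero (NeZero.ne n₁) (NeZero.ne n₂)⟩
  set e := ZMod.chineseRemainder hco with he
  set f₁ : ZMod (n₁ * n₂) →* ZMod n₁ :=
    ((RingHom.fst (ZMod n₁) (ZMod n₂)).comp e.toRingHom).toMonoidHom with hf₁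
  set f₂ : ZMod (n₁ * n₂) →* ZMod n₂ :=
    ((RingHom.snd (ZMod n₁) (ZMod n₂)).comp e.toRingHom).toMonoidHom with hf₂
  set u₁ : (ZMod n₁)ˣ := Units.map f₁ u with hu₁
  set u₂ : (ZMod n₂)ˣ := Units.map f₂ u with hu₂
  -- transfer the sign computation along e
  have key : sign (MulAction.toPerm u : Perm (ZMod (n₁ * n₂))) =
      sign ((Equiv.prodCongrLeft (fun _ : ZMod n₂ => (MulAction.toPerm u₁ : Perm (ZMod n₁)))) *
        (Equiv.prodCongrRight (fun _ : ZMod n₁ => (MulAction.toPerm u₂ : Perm (ZMod n₂))))) := by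
    refine Equiv.Perm.sign_eq_sign_of_equiv _ _ e.toEquiv ?_
    intro x
    have : e ((u : ZMod (n₁ * n₂)) * x) = e (u : ZMod (n₁ * n₂)) * e x := map_mul e _ _
    rw [MulAction.toPerm_apply, Units.smul_def, smul_eq_mul]
    show e ((u : ZMod (n₁ * n₂)) * x) = _
    rw [this]
    rw [Equiv.Perm.mul_apply]
    have hre : (Equiv.prodCongrRight (fun _ : ZMod n₁ => (MulAction.toPerm u₂ : Perm (ZMod n₂))))
        (e.toEquiv x) = ((e x).1, (u₂ : ZMod n₂) * (e x).2) := by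
      cases hx : (e.toEquiv x)
      simp [Equiv.prodCongrRight, Units.smul_def, hx]
    rw [hre]
    have hle : (Equiv.prodCongrLeft (fun _ : ZMod n₂ => (MulAction.toPerm u₁ : Perm (ZMod n₁))))
        ((e x).1, (u₂ : ZMod n₂) * (e x).2) = ((u₁ : ZMod n₁) * (e x).1, (u₂ : ZMod n₂) * (e x).2) := by
      simp [Equiv.prodCongrLeft, Units.smul_def]
    rw [hle]
    have c1 : (e ((u : ZMod (n₁ * n₂)))).1 = (u₁ : ZMod n₁) := rfl
    have c2 : (e ((u : ZMod (n₁ * n₂)))).2 = (u₂ : ZMod n₂) := rfl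
    rw [Prod.mul_def, c1, c2]
  rw [key, map_mul, Equiv.Perm.sign_prodCongrLeft, Equiv.Perm.sign_prodCongrRight,
    Finset.prod_const, Finset.prod_const, Finset.card_univ, Finset.card_univ,
    ZMod.card n₂, ZMod.card n₁, unitsPowOddEq _ h₂, unitsPowOddEq _ h₁]
  push_cast
  rw [H₁ u₁, H₂ u₂]
  -- identify the jacobi symbols
  have hcast : ∀ (m : ℕ) (hm : m ∣ n₁ * n₂) (g : ZMod (n₁ * n₂) →* ZMod m) [NeZero m],
      True := fun _ _ _ => trivial
  have hval₁ : ((u₁ : ZMod n₁).val : ℤ) % n₁ = (((u : ZMod (n₁ * n₂)).val : ℤ)) % n₁ := by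
    have hf : f₁ = (ZMod.castHom (dvd_mul_right n₁ n₂) (ZMod n₁)).toMonoidHom := by
      have : (RingHom.fst (ZMod n₁) (ZMod n₂)).comp e.toRingHom =
          ZMod.castHom (dvd_mul_right n₁ n₂) (ZMod n₁) := Subsingleton.elim _ _
      rw [hf₁, this]
    have : (u₁ : ZMod n₁) = (((u : ZMod (n₁ * n₂)).val : ℕ) : ZMod n₁) := by
      rw [hu₁, Units.coe_map, hf]
      simp only [RingHom.toMonoidHom_eq_coe, MonoidHom.coe_coe, ZMod.castHom_apply]
      rw [ZMod.natCast_val]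
    rw [this, ZMod.val_natCast]
    push_cast
    simp [Int.emod_emod_of_dvd]
  have hval₂ : ((u₂ : ZMod n₂).val : ℤ) % n₂ = (((u : ZMod (n₁ * n₂)).val : ℤ)) % n₂ := by
    have hf : f₂ = (ZMod.castHom (dvd_mul_left n₂ n₁) (ZMod n₂)).toMonoidHom := by
      have : (RingHom.snd (ZMod n₁) (ZMod n₂)).comp e.toRingHom =
          ZMod.castHom (dvd_mul_left n₂ n₁) (ZMod n₂) := Subsingleton.elim _ _
      rw [hf₂, this]
    have : (u₂ : ZMod n₂) = (((u : ZMod (n₁ * n₂)).val : ℕ) : ZMod n₂) := by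
      rw [hu₂, Units.coe_map, hf]
      simp only [RingHom.toMonoidHom_eq_coe, MonoidHom.coe_coe, ZMod.castHom_apply]
      rw [ZMod.natCast_val]
    rw [this, ZMod.val_natCast]
    push_cast
    simp [Int.emod_emod_of_dvd]
  rw [jacobiSym.mod_left' hval₁, jacobiSym.mod_left' hval₂, ← jacobiSym.mul_right]


private theorem zolotarev (n : ℕ) : Odd n → ∀ [NeZero n] (u : (ZMod n)ˣ),
    ((sign (MulAction.toPerm u : Perm (ZMod n)) : ℤˣ) : ℤ) =
      jacobiSym (((u : ZMod n).val : ℤ)) n := by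
  induction n using Nat.strong_induction_on with
  | _ n IH =>
    intro hn _inst u
    rcases eq_or_ne n 1 with rfl | hn1
    · have hperm : (MulAction.toPerm u : Perm (ZMod 1)) = Equiv.refl (ZMod 1) := by
        ext x
        exact Subsingleton.elim _ _
      rw [hperm, Equiv.Perm.sign_refl, jacobiSym.one_right, Units.val_one]
    · have hn0 : n ≠ 0 := hn.pos.ne'
      set p := n.minFac with hpdef
      have pp : p.Prime := Nat.minFac_prime hn1
      have hpn : p ∣ n := Nat.minFac_dvd n
      have hp2 : p ≠ 2 := by
        intro hp
        obtain ⟨c, hc⟩ := hpn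
        rw [Nat.odd_iff] at hn
        rw [hp] at hc
        omega
      set k := n.factorization p with hkdef
      have hk1 : 0 < k := pp.factorization_pos_of_dvd hn0 hpn
      set m := n / p ^ k with hmdef
      have hnm : p ^ k * m = n := Nat.ordProj_mul_ordCompl_eq_self n p
      have hco : (p ^ k).Coprime m := Nat.Coprime.pow_left k (Nat.coprime_ordCompl pp hn0)
      have hpk1 : 1 < p ^ k := Nat.one_lt_pow hk1.ne' pp.one_lt
      have hcases : (∃ q j : ℕ, q.Prime ∧ q ≠ 2 ∧ 0 < j ∧ n = q ^ j) ∨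
          (∃ a b : ℕ, 1 < a ∧ 1 < b ∧ a.Coprime b ∧ n = a * b) := by
        rcases eq_or_ne m 1 with hm1 | hm1
        · exact Or.inl ⟨p, k, pp, hp2, hk1, by rw [← hnm, hm1, mul_one]⟩
        · refine Or.inr ⟨p ^ k, m, hpk1, ?_, hco, hnm.symm⟩
          have hmn : m ∣ n := ⟨p ^ k, by rw [← hnm]; ring⟩
          have hm0 : m ≠ 0 := by
            intro h
            rw [h, mul_zero] at hnm
            exact hn0 hnm.symm
          exact Nat.one_lt_iff_ne_zero_and_ne_one.mpr ⟨hm0, hm1⟩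
      clear hpdef hkdef hmdef hnm hco hpk1 hpn hk1
      rcases hcases with ⟨q, j, hq, hq2, hj, rfl⟩ | ⟨a, b, ha, hb, hab, rfl⟩
      · haveI : Fact q.Prime := ⟨hq⟩
        haveI : NeZero (q ^ (j - 1)) := ⟨pow_ne_zero _ hq.pos.ne'⟩
        refine pp_step q j hq2 hj u ?_
        intro v
        have hlt : q ^ (j - 1) < q ^ j := Nat.pow_lt_pow_right hq.one_lt (by omega)
        have hodd : Odd (q ^ (j - 1)) := (hq.odd_of_ne_two hq2).pow
        exact IH _ hlt hodd v
      · haveI : NeZero a := ⟨by omega⟩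
        haveI : NeZero b := ⟨by omega⟩
        obtain ⟨hoa, hob⟩ := (Nat.odd_mul).mp hn
        have hlta : a < a * b := (lt_mul_iff_one_lt_right (by omega : 0 < a)).mpr hb
        have hltb : b < a * b := (lt_mul_iff_one_lt_left (by omega : 0 < b)).mpr ha
        exact crt_step a b hab hoa hob u (IH a hlta hoa) (IH b hltb hob)


private lemma boundedCastInj {b : ℕ} [NeZero b] {x y : ℕ} (hx1 : 1 ≤ x) (hxb : x ≤ b)
    (hy1 : 1 ≤ y) (hyb : y ≤ b) (hxy : (x : ZMod b) = (y : ZMod b)) : x = y := by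
  rw [ZMod.natCast_eq_natCast_iff] at hxy
  have hd := (Nat.modEq_iff_dvd).mp hxy
  have habs : |(y : ℤ) - (x : ℤ)| < (b : ℤ) := by
    rw [abs_lt]
    omega
  have := Int.eq_zero_of_abs_lt_dvd hd habs
  omega

private lemma modRep_bounds {a b x : ℕ} (hb : 0 < b) :
    1 ≤ modRep a b x ∧ modRep a b x ≤ b := by
  unfold modRep
  split
  · omega
  · have := Nat.mod_lt (a * x) hb
    omega

private lemma modRep_cast {a b x : ℕ} [NeZero b] :
    ((modRep a b x : ℕ) : ZMod b) = ((a * x : ℕ) : ZMod b) := by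
  unfold modRep
  split_ifs with hz
  · rw [← ZMod.natCast_mod (a * x) b, hz, Nat.cast_zero, ZMod.natCast_self]
  · rw [ZMod.natCast_mod]

theorem stmt15 (a b : ℕ) (hb : 3 ≤ b) (hodd : Odd b) (h : Nat.Coprime a b) :
    ((-1 : ℤ)) ^ invNum a b = jacobiSym (a : ℤ) b := by
  haveI : NeZero b := ⟨by omega⟩
  have hb0 : 0 < b := by omega
  set u : (ZMod b)ˣ := ZMod.unitOfCoprime a h with hu
  have hucoe : (u : ZMod b) = (a : ZMod b) := ZMod.coe_unitOfCoprime a h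
  -- the permutation on Fin b
  set σf : Fin b → Fin b := fun i =>
    ⟨modRep a b (i.1 + 1) - 1, by have := modRep_bounds (a := a) (x := i.1 + 1) hb0; omega⟩
    with hσf
  have key : ∀ i : Fin b, ((modRep a b (i.1 + 1) : ℕ) : ZMod b) =
      (u : ZMod b) * (((i.1 + 1 : ℕ) : ℕ) : ZMod b) := by
    intro i
    rw [modRep_cast, hucoe, Nat.cast_mul]
  have hinj : Function.Injective σf := by
    intro i j hij
    have h1 : modRep a b (i.1 + 1) = modRep a b (j.1 + 1) := by
      have hbi := modRep_bounds (a := a) (b := b) (x := i.1 + 1) hb0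
      have hbj := modRep_bounds (a := a) (b := b) (x := j.1 + 1) hb0
      have := congrArg Fin.val hij
      simp only [hσf] at this
      omega
    have h2 : ((modRep a b (i.1 + 1) : ℕ) : ZMod b) = ((modRep a b (j.1 + 1) : ℕ) : ZMod b) := by
      rw [h1]
    rw [key i, key j] at h2
    have h3 := (Units.mul_right_inj u).mp h2
    have h4 : i.1 + 1 = j.1 + 1 :=
      boundedCastInj (by omega) (by omega : i.1 + 1 ≤ b) (by omega) (by omega : j.1 + 1 ≤ b) h3
    exact Fin.ext (by omega)
  set σ : Perm (Fin b) := Equiv.ofBijective σf (Finite.injective_iff_bijective.mp hinj) with hσ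
  -- inversion count
  have hcount : ((finPairsLT b).filter (fun x => σ x.1 ≤ σ x.2)).card = invNum a b := by
    rw [invNum]
    refine Finset.card_bij' (fun x _ => (x.2.1 + 1, x.1.1 + 1))
      (fun q hq => ⟨⟨q.2 - 1, ?_⟩, ⟨q.1 - 1, ?_⟩⟩) ?_ ?_ ?_ ?_
    · simp only [Finset.mem_filter, Finset.mem_product, Finset.mem_Icc] at hq
      omega
    · simp only [Finset.mem_filter, Finset.mem_product, Finset.mem_Icc] at hq
      omega
    · -- maps into target
      rintro ⟨x1, x2⟩ hx
      simp only [Finset.mem_filter, Equiv.Perm.mem_finPairsLT] at hx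
      obtain ⟨hlt, hle⟩ := hx
      have hlt' : (x2 : ℕ) < (x1 : ℕ) := hlt
      have hb1 := modRep_bounds (a := a) (b := b) (x := x1.1 + 1) hb0
      have hb2 := modRep_bounds (a := a) (b := b) (x := x2.1 + 1) hb0
      have hle' : modRep a b (x1.1 + 1) - 1 ≤ modRep a b (x2.1 + 1) - 1 := by
        have := hle
        rw [hσ] at this
        simpa [Equiv.ofBijective_apply, hσf, Fin.le_def] using this
      have hne : modRep a b (x1.1 + 1) ≠ modRep a b (x2.1 + 1) := by
        intro heq
        have h2 : ((modRep a b (x1.1 + 1) : ℕ) : ZMod b) =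
            ((modRep a b (x2.1 + 1) : ℕ) : ZMod b) := by rw [heq]
        rw [key x1, key x2] at h2
        have h3 := (Units.mul_right_inj u).mp h2
        have h4 : x1.1 + 1 = x2.1 + 1 :=
          boundedCastInj (by omega) (by omega : x1.1 + 1 ≤ b) (by omega)
            (by omega : x2.1 + 1 ≤ b) h3
        omega
      simp only [Finset.mem_filter, Finset.mem_product, Finset.mem_Icc]
      refine ⟨⟨⟨by omega, by omega⟩, by omega, by omega⟩, by omega, ?_⟩
      omega
    · -- j maps into source
      rintro ⟨q1, q2⟩ hq
      simp only [Finset.mem_filter, Finset.mem_product, Finset.mem_Icc] at hq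
      obtain ⟨⟨⟨hq11, hq12⟩, hq21, hq22⟩, hlt, hmr⟩ := hq
      simp only [Finset.mem_filter, Equiv.Perm.mem_finPairsLT]
      constructor
      · show (⟨q1 - 1, _⟩ : Fin b) < ⟨q2 - 1, _⟩
        rw [Fin.lt_def]
        simp only
        omega
      · show σ ⟨q2 - 1, _⟩ ≤ σ ⟨q1 - 1, _⟩
        rw [hσ, Fin.le_def]
        simp only [Equiv.ofBijective_apply, hσf]
        have e1 : q2 - 1 + 1 = q2 := by omega
        have e2 : q1 - 1 + 1 = q1 := by omega
        simp only [e1, e2]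
        omega
    · rintro ⟨x1, x2⟩ hx
      simp only []
      congr 1 <;> exact Fin.ext (by omega)
    · rintro ⟨q1, q2⟩ hq
      simp only [Finset.mem_filter, Finset.mem_product, Finset.mem_Icc] at hq
      have : q2 - 1 + 1 = q2 := by omega
      have h2 : q1 - 1 + 1 = q1 := by omega
      simp only [this, h2]
  -- sign of σ equals sign of multiplication by u
  have heqv : sign σ = sign (MulAction.toPerm u : Perm (ZMod b)) := by
    have hecast : Function.Bijective (fun i : Fin b => (((i.1 + 1 : ℕ)) : ZMod b)) := by
      rw [Fintype.bijective_iff_injective_and_card]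
      constructor
      · intro i j hij
        have := boundedCastInj (x := i.1 + 1) (y := j.1 + 1) (by omega) (by omega : i.1 + 1 ≤ b)
          (by omega) (by omega : j.1 + 1 ≤ b) hij
        exact Fin.ext (by omega)
      · rw [Fintype.card_fin, ZMod.card]
    refine Equiv.Perm.sign_eq_sign_of_equiv _ _ (Equiv.ofBijective _ hecast) ?_
    intro i
    show ((((σ i).1 + 1 : ℕ)) : ZMod b) = MulAction.toPerm u (((i.1 + 1 : ℕ) : ZMod b))
    rw [MulAction.toPerm_apply, Units.smul_def, smul_eq_mul]
    have hs1 : (σ i).1 = modRep a b (i.1 + 1) - 1 := by rw [hσ]; rfl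
    have hbd := modRep_bounds (a := a) (b := b) (x := i.1 + 1) hb0
    rw [hs1]
    have : modRep a b (i.1 + 1) - 1 + 1 = modRep a b (i.1 + 1) := by omega
    rw [this, key i]
  -- assemble
  have hfin : ((sign σ : ℤˣ) : ℤ) = ((-1 : ℤ)) ^ invNum a b := by
    rw [sign_eq_neg_one_pow σ, hcount]
    push_cast
    ring
  rw [← hfin, heqv, zolotarev b hodd u]
  have hval : ((u : ZMod b).val : ℤ) % b = (a : ℤ) % b := by
    rw [hucoe, ZMod.val_natCast]
    push_cast
    simp [Int.emod_emod_of_dvd]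
  rw [jacobiSym.mod_left' hval]
end

section
/- Let b ≥ 2 and let a₁, a₂ be coprime to b with 1 ≤ a₁, a₂ ≤ b-1. Suppose there exist r, s such that b ≡ r (mod a₁), b ≡ r (mod a₂), a₁ ≡ a₂ ≡ s (mod r), and b mod a₁ = r with a₁ mod r reducing to 1 in the continued-fraction sense (i.e., the Euclidean remainder sequence of (b, aᵢ) has length 2: b, aᵢ, r, 1). If inv(a₁,b) = inv(a₂,b), then a₁ = a₂. -/
open Finset

lemma gauss_sum (n : ℕ) : 2 * ∑ j ∈ Icc 1 n, (j : ℤ) = n * (n + 1) := by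
  induction n with
  | zero => simp
  | succ n ih =>
      rw [Finset.sum_Icc_succ_top (by omega)]
      push_cast
      push_cast at ih
      linarith

lemma sq_sum (n : ℕ) : 6 * ∑ j ∈ Icc 1 n, (j : ℤ)^2 = n * (n + 1) * (2 * n + 1) := by
  induction n with
  | zero => simp
  | succ n ih =>
      rw [Finset.sum_Icc_succ_top (by omega)]
      push_cast
      push_cast at ih
      linarith

lemma gauss_sum' (c n : ℕ) (h : c ≤ n) :
    2 * ∑ j ∈ Icc (c + 1) n, (j : ℤ) + c * (c + 1) = n * (n + 1) := by
  have split : ∑ j ∈ Icc 1 c, (j : ℤ) + ∑ j ∈ Icc (c+1) n, (j : ℤ) = ∑ j ∈ Icc 1 n, (j : ℤ) := by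
    rw [← Finset.Ico_add_one_right_eq_Icc 1 c, ← Finset.Ico_add_one_right_eq_Icc (c+1) n, ← Finset.Ico_add_one_right_eq_Icc 1 n]
    exact Finset.sum_Ico_consecutive _ (by omega) (by omega)
  have h1 := gauss_sum c
  have h2 := gauss_sum n
  push_cast at *
  linarith

-- permutation sum
lemma perm_sum (r a : ℕ) (h : Nat.Coprime r a) (ha : 1 < a) (f : ℕ → ℤ) :
    ∑ m ∈ Icc 1 (a - 1), f (m * r % a) = ∑ v ∈ Icc 1 (a - 1), f v := by
  obtain ⟨u, -, hu⟩ := Nat.exists_mul_mod_eq_one_of_coprime h ha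
  have hne : ∀ m, 1 ≤ m → m ≤ a - 1 → m * r % a ≠ 0 := by
    intro m h1 h2 h0
    have hd : a ∣ m * r := Nat.dvd_of_mod_eq_zero h0
    have : a ∣ m := (Nat.Coprime.dvd_of_dvd_mul_right (Nat.coprime_comm.mp h) hd)
    have := Nat.le_of_dvd (by omega) this
    omega
  refine Finset.sum_nbij' (fun m => m * r % a) (fun v => v * u % a) ?_ ?_ ?_ ?_ ?_
  · intro m hm
    simp only [Finset.mem_Icc] at *
    have := Nat.mod_lt (m * r) (show 0 < a by omega)
    have := hne m hm.1 hm.2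
    omega
  · intro v hv
    simp only [Finset.mem_Icc] at *
    have hlt := Nat.mod_lt (v * u) (show 0 < a by omega)
    have h0 : v * u % a ≠ 0 := by
      intro h0
      have h1 : v * u % a * r % a = v * (u * r) % a := by
        rw [Nat.mod_mul_mod, mul_assoc]
      rw [h0, Nat.zero_mul, Nat.zero_mod] at h1
      rw [Nat.mul_mod, mul_comm u r, hu, mul_one, Nat.mod_mod_of_dvd _ dvd_rfl,
        Nat.mod_eq_of_lt (by omega)] at h1
      omega
    omega
  · intro m hm
    simp only [Finset.mem_Icc] at hm
    show m * r % a * u % a = m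
    have : m * r % a * u % a = m * (r * u) % a := by
      rw [Nat.mod_mul_mod, mul_assoc]
    rw [this, Nat.mul_mod, hu, mul_one, Nat.mod_mod_of_dvd _ dvd_rfl, Nat.mod_eq_of_lt (by omega)]
  · intro v hv
    simp only [Finset.mem_Icc] at hv
    show v * u % a * r % a = v
    have : v * u % a * r % a = v * (u * r) % a := by
      rw [Nat.mod_mul_mod, mul_assoc]
    rw [this, Nat.mul_mod, mul_comm u r, hu, mul_one, Nat.mod_mod_of_dvd _ dvd_rfl, Nat.mod_eq_of_lt (by omega)]
  · intro m hm; rfl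


lemma div_lt_lin (a b j : ℕ) (hb : 0 < b) (hj : j < b) (ha : 0 < a) :
    a * j / b ≤ a - 1 := by
  have h2 : a * j / b < a := by
    rw [Nat.div_lt_iff_lt_mul hb]
    exact Nat.mul_lt_mul_of_pos_left hj ha
  omega

lemma div_as_card (a b j : ℕ) (hb : 0 < b) (hj : j < b) :
    ((a * j / b : ℕ) : ℤ) = ∑ m ∈ Icc 1 (a - 1), (if m * b ≤ a * j then (1:ℤ) else 0) := by
  have hdiv : a * j / b ≤ a - 1 := by
    rcases Nat.eq_zero_or_pos a with h | h
    · simp [h]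
    · exact div_lt_lin a b j hb hj h
  have hfil : (Icc 1 (a-1)).filter (fun m => m * b ≤ a * j) = Icc 1 (a * j / b) := by
    ext m
    simp only [mem_filter, mem_Icc, ← Nat.le_div_iff_mul_le hb]
    generalize a * j / b = c at hdiv ⊢
    omega
  have : (a * j / b : ℕ) = ((Icc 1 (a-1)).filter (fun m => m * b ≤ a * j)).card := by
    rw [hfil, Nat.card_Icc, Nat.add_sub_cancel]
  rw [this, Finset.card_filter]
  push_cast
  rfl

lemma swap_sum (a b : ℕ) (hab : Nat.Coprime a b) (ha : 0 < a) (hb : 1 < b) (w : ℕ → ℤ) :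
    ∑ j ∈ Icc 1 (b - 1), w j * ((a * j / b : ℕ) : ℤ)
      = ∑ m ∈ Icc 1 (a - 1), ∑ j ∈ Icc (m * b / a + 1) (b - 1), w j := by
  have key : ∀ m ∈ Icc 1 (a - 1), ∀ j : ℕ, (m * b ≤ a * j ↔ m * b / a < j) := by
    intro m hm j
    simp only [mem_Icc] at hm
    have hne : m * b ≠ a * j := by
      intro he
      have hd : a ∣ m * b := ⟨j, he⟩
      have : a ∣ m := hab.dvd_of_dvd_mul_right hd
      have := Nat.le_of_dvd (by omega) this
      omega
    rw [Nat.div_lt_iff_lt_mul ha, mul_comm j a]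
    constructor
    · intro hle; omega
    · intro hlt; omega
  calc ∑ j ∈ Icc 1 (b - 1), w j * ((a * j / b : ℕ) : ℤ)
      = ∑ j ∈ Icc 1 (b - 1), ∑ m ∈ Icc 1 (a - 1), (if m * b ≤ a * j then w j else 0) := by
        apply Finset.sum_congr rfl
        intro j hj
        simp only [mem_Icc] at hj
        rw [div_as_card a b j (by omega) (by omega), Finset.mul_sum]
        apply Finset.sum_congr rfl
        intro m _
        rw [mul_ite, mul_one, mul_zero]
    _ = ∑ m ∈ Icc 1 (a - 1), ∑ j ∈ Icc 1 (b - 1), (if m * b ≤ a * j then w j else 0) :=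
        Finset.sum_comm
    _ = ∑ m ∈ Icc 1 (a - 1), ∑ j ∈ Icc (m * b / a + 1) (b - 1), w j := by
        apply Finset.sum_congr rfl
        intro m hm
        rw [← Finset.sum_filter]
        congr 1
        ext j
        simp only [mem_filter, mem_Icc, key m hm j]
        generalize m * b / a = c
        omega



section
variable (a b : ℕ)

lemma nzmod (hab : Nat.Coprime a b) (hb : 2 ≤ b) :
    ∀ x, 1 ≤ x → x ≤ b - 1 → a * x % b ≠ 0 := by
  intro x h1 h2 h0
  have hd : b ∣ a * x := Nat.dvd_of_mod_eq_zero h0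
  have : b ∣ x := (Nat.Coprime.dvd_of_dvd_mul_left (Nat.coprime_comm.mp hab) hd)
  have := Nat.le_of_dvd (by omega) this
  omega

lemma rep_cond (hab : Nat.Coprime a b) (hb : 2 ≤ b) :
    ∀ i j, 1 ≤ i → i < j → j ≤ b - 1 →
      (modRep a b j < modRep a b i ↔ b ≤ a * i % b + a * (j - i) % b) := by
  intro i j h1 h2 h3
  have hA := nzmod a b hab hb i h1 (by omega)
  have hD := nzmod a b hab hb (j - i) (by omega) (by omega)
  have hJ := nzmod a b hab hb j (by omega) h3
  have hAlt : a * i % b < b := Nat.mod_lt _ (by omega)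
  have hDlt : a * (j - i) % b < b := Nat.mod_lt _ (by omega)
  have hij : i + (j - i) = j := by omega
  have hsplit : a * j = a * i + a * (j - i) := by rw [← mul_add, hij]
  have hmod : a * j % b = (a * i % b + a * (j - i) % b) % b := by
    rw [hsplit, Nat.add_mod]
  rw [show modRep a b j = a * j % b from if_neg hJ,
      show modRep a b i = a * i % b from if_neg hA]
  set A := a * i % b
  set D := a * (j - i) % b
  rcases le_or_gt b (A + D) with hc | hc
  · have hne : A + D ≠ b := by
      intro he
      rw [hmod, he, Nat.mod_self] at hJ
      exact hJ rfl
    have : (A + D) % b = A + D - b := by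
      rw [Nat.mod_eq_sub_mod hc, Nat.mod_eq_of_lt (by omega)]
    rw [hmod, this]
    omega
  · have : (A + D) % b = A + D := Nat.mod_eq_of_lt hc
    rw [hmod, this]
    omega

lemma pointwise_div (hab : Nat.Coprime a b) (hb : 2 ≤ b) :
    ∀ i j, 1 ≤ i → i < j → j ≤ b - 1 →
      a * j / b = a * i / b + a * (j - i) / b
        + (if modRep a b j < modRep a b i then 1 else 0) := by
  intro i j h1 h2 h3
  have hij : i + (j - i) = j := by omega
  have hsplit : a * j = a * i + a * (j - i) := by rw [← mul_add, hij]
  rw [hsplit, Nat.add_div (show 0 < b by omega)]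
  congr 1
  exact if_congr (rep_cond a b hab hb i j h1 h2 h3).symm rfl rfl

lemma invNum_as_sum (hab : Nat.Coprime a b) (hb : 2 ≤ b) :
    invNum a b = ∑ j ∈ Icc 1 (b - 1), ∑ i ∈ Icc 1 (j - 1),
      (if modRep a b j < modRep a b i then 1 else 0) := by
  have hb' : (0:ℕ) < b := by omega
  have hp : invNum a b = ∑ i ∈ Icc 1 b, ∑ j ∈ Icc 1 b,
      (if i < j ∧ modRep a b j < modRep a b i then 1 else 0) := by
    rw [invNum, Finset.card_filter, Finset.sum_product]
  rw [hp, Finset.sum_comm]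
  rw [← Finset.sum_subset (Finset.Icc_subset_Icc_right (show b - 1 ≤ b by omega))
      (by
        intro j hj hj'
        simp only [mem_Icc] at hj hj'
        have hjb : j = b := by omega
        apply Finset.sum_eq_zero
        intro i hi
        simp only [mem_Icc] at hi
        rw [if_neg]
        rintro ⟨hij, hrep⟩
        have h1 : modRep a b j = b := by
          rw [modRep, hjb, if_pos (Nat.mul_mod_left a b)]
        rw [h1] at hrep
        have : modRep a b i ≤ b := by
          rw [modRep]
          split
          · exact le_refl b
          · exact le_of_lt (Nat.mod_lt _ hb')
        omega)]
  apply Finset.sum_congr rfl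
  intro j hj
  simp only [mem_Icc] at hj
  rw [← Finset.sum_subset (show Icc 1 (j-1) ⊆ Icc 1 b by
        apply Finset.Icc_subset_Icc_right; omega)
      (by
        intro i hi hi'
        simp only [mem_Icc] at hi hi'
        rw [if_neg]
        rintro ⟨hij, -⟩
        omega)]
  apply Finset.sum_congr rfl
  intro i hi
  simp only [mem_Icc] at hi
  have : i < j := by omega
  simp [this]

lemma triangle_sum (g : ℕ → ℕ) : ∀ n : ℕ,
    ∑ j ∈ Icc 1 n, ∑ i ∈ Icc 1 (j - 1), g i = ∑ i ∈ Icc 1 n, (n - i) * g i := by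
  intro n
  induction n with
  | zero => simp
  | succ n ih =>
      rw [Finset.sum_Icc_succ_top (by omega), Finset.sum_Icc_succ_top (by omega), ih]
      simp only [Nat.add_sub_cancel]
      rw [Nat.sub_self, zero_mul, add_zero]
      rw [← Finset.sum_add_distrib]
      apply Finset.sum_congr rfl
      intro i hi
      simp only [mem_Icc] at hi
      have h1 : n + 1 - i = (n - i) + 1 := by omega
      rw [h1, add_mul, one_mul]

lemma reflect_div (j : ℕ) :
    ∑ i ∈ Icc 1 (j - 1), a * (j - i) / b = ∑ i ∈ Icc 1 (j - 1), a * i / b := by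
  refine Finset.sum_nbij' (fun i => j - i) (fun i => j - i) ?_ ?_ ?_ ?_ ?_ <;>
    intro i hi <;> simp only [mem_Icc] at * <;> try omega

lemma master (hab : Nat.Coprime a b) (hb : 2 ≤ b) :
    ∑ j ∈ Icc 1 (b - 1), (j - 1) * (a * j / b)
      = 2 * ∑ i ∈ Icc 1 (b - 1), (b - 1 - i) * (a * i / b) + invNum a b := by
  have key : ∀ j ∈ Icc 1 (b - 1), (j - 1) * (a * j / b)
      = 2 * ∑ i ∈ Icc 1 (j - 1), (a * i / b)
        + ∑ i ∈ Icc 1 (j - 1), (if modRep a b j < modRep a b i then 1 else 0) := by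
    intro j hj
    simp only [mem_Icc] at hj
    have h2 : (Icc 1 (j - 1)).card = j - 1 := by simp [Nat.card_Icc]
    have h1 : ∑ _i ∈ Icc 1 (j - 1), (a * j / b) = (j - 1) * (a * j / b) := by
      rw [Finset.sum_const, h2, smul_eq_mul]
    calc (j - 1) * (a * j / b) = ∑ _i ∈ Icc 1 (j - 1), (a * j / b) := h1.symm
      _ = ∑ i ∈ Icc 1 (j - 1), (a * i / b + a * (j - i) / b
            + (if modRep a b j < modRep a b i then 1 else 0)) := by
          apply Finset.sum_congr rfl
          intro i hi
          simp only [mem_Icc] at hi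
          exact pointwise_div a b hab hb i j (by omega) (by omega) (by omega)
      _ = (∑ i ∈ Icc 1 (j - 1), (a * i / b) + ∑ i ∈ Icc 1 (j - 1), (a * (j - i) / b))
            + ∑ i ∈ Icc 1 (j - 1), (if modRep a b j < modRep a b i then 1 else 0) := by
          rw [Finset.sum_add_distrib, Finset.sum_add_distrib]
      _ = 2 * ∑ i ∈ Icc 1 (j - 1), (a * i / b)
            + ∑ i ∈ Icc 1 (j - 1), (if modRep a b j < modRep a b i then 1 else 0) := by
          rw [reflect_div a b j]
          ring
  rw [Finset.sum_congr rfl key, Finset.sum_add_distrib, ← invNum_as_sum a b hab hb,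
      ← Finset.mul_sum, triangle_sum (fun x => a * x / b) (b - 1)]
end

lemma formula (q r k a b : ℕ) (hA : a = k*r+1) (hB : b = q*a+r)
    (hq : 1 ≤ q) (hr : 2 ≤ r) (hk : 1 ≤ k) :
    4 * invNum a b = q*k*r*(q + r + k + q*r*k) := by
  have hra : r < a := by
    have : r ≤ k * r := Nat.le_mul_of_pos_left r (by omega)
    omega
  have ha1 : 1 < a := by omega
  have hb2 : 2 ≤ b := by
    have : 1 * a ≤ q * a := Nat.mul_le_mul_right a hq
    omega
  have hmod1 : a % r = 1 := by
    have h1 : a = 1 + k * r := by omega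
    rw [h1, Nat.add_mul_mod_self_right]
    exact Nat.mod_eq_of_lt (by omega)
  have hcra : Nat.Coprime r a := by
    unfold Nat.Coprime
    rw [Nat.gcd_rec, hmod1, Nat.gcd_one_left]
  have hmodba : b % a = r := by
    have h1 : b = r + q * a := by omega
    rw [h1, Nat.add_mul_mod_self_right]
    exact Nat.mod_eq_of_lt hra
  have hcab : Nat.Coprime a b := by
    unfold Nat.Coprime
    rw [Nat.gcd_rec, hmodba]
    exact hcra
  -- step 1: master equation over ℤ
  have hcast1 : ((∑ j ∈ Icc 1 (b-1), (j-1) * (a*j/b) : ℕ) : ℤ)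
      = ∑ j ∈ Icc 1 (b-1), ((j:ℤ) - 1) * ((a*j/b : ℕ) : ℤ) := by
    push_cast
    refine Finset.sum_congr rfl ?_
    intro j hj
    simp only [mem_Icc] at hj
    have h : ((j - 1 : ℕ) : ℤ) = (j:ℤ) - 1 := by omega
    rw [h]
  have hcast2 : ((∑ j ∈ Icc 1 (b-1), (b-1-j) * (a*j/b) : ℕ) : ℤ)
      = ∑ j ∈ Icc 1 (b-1), ((b:ℤ) - 1 - (j:ℤ)) * ((a*j/b : ℕ) : ℤ) := by
    push_cast
    refine Finset.sum_congr rfl ?_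
    intro j hj
    simp only [mem_Icc] at hj
    have h : ((b - 1 - j : ℕ) : ℤ) = (b:ℤ) - 1 - j := by omega
    rw [h]
  have masterZ : ∑ j ∈ Icc 1 (b-1), ((j:ℤ) - 1) * ((a*j/b : ℕ) : ℤ)
      = 2 * ∑ j ∈ Icc 1 (b-1), ((b:ℤ) - 1 - (j:ℤ)) * ((a*j/b : ℕ) : ℤ) + (invNum a b : ℤ) := by
    rw [← hcast1, ← hcast2, master a b hcab hb2]
    push_cast
    ring
  have hSA : ∑ j ∈ Icc 1 (b-1), ((j:ℤ) - 1) * ((a*j/b : ℕ) : ℤ)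
      = ∑ j ∈ Icc 1 (b-1), (j:ℤ) * ((a*j/b : ℕ) : ℤ)
        - ∑ j ∈ Icc 1 (b-1), ((a*j/b : ℕ) : ℤ) := by
    rw [← Finset.sum_sub_distrib]
    exact Finset.sum_congr rfl fun j _ => by ring
  have hSB : ∑ j ∈ Icc 1 (b-1), ((b:ℤ) - 1 - (j:ℤ)) * ((a*j/b : ℕ) : ℤ)
      = ((b:ℤ) - 1) * ∑ j ∈ Icc 1 (b-1), ((a*j/b : ℕ) : ℤ)
        - ∑ j ∈ Icc 1 (b-1), (j:ℤ) * ((a*j/b : ℕ) : ℤ) := by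
    rw [Finset.mul_sum, ← Finset.sum_sub_distrib]
    exact Finset.sum_congr rfl fun j _ => by ring
  have hinv : (invNum a b : ℤ)
      = 3 * ∑ j ∈ Icc 1 (b-1), (j:ℤ) * ((a*j/b : ℕ) : ℤ)
        - (2*(b:ℤ) - 1) * ∑ j ∈ Icc 1 (b-1), ((a*j/b : ℕ) : ℤ) := by
    linear_combination hSA - 2*hSB - masterZ
  -- step 2: swap sums over the staircase
  have hBmle : ∀ m ∈ Icc 1 (a-1), m*b/a ≤ b - 1 := by
    intro m hm
    simp only [mem_Icc] at hm
    have h := div_lt_lin b a m (by omega) (by omega) (by omega)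
    rwa [mul_comm b m] at h
  have hswap0 := swap_sum a b hcab (by omega) (by omega) (fun _ => (1:ℤ))
  have hswap1 := swap_sum a b hcab (by omega) (by omega) (fun j => (j:ℤ))
  simp only [one_mul] at hswap0
  have hinner0 : ∀ m ∈ Icc 1 (a-1), ∑ _j ∈ Icc (m*b/a+1) (b-1), (1:ℤ)
      = (b:ℤ) - 1 - ((m*b/a : ℕ):ℤ) := by
    intro m hm
    have hle := hBmle m hm
    rw [Finset.sum_const, Nat.card_Icc, nsmul_eq_mul, mul_one]
    generalize m*b/a = c at *
    omega
  have hinner1 : ∀ m ∈ Icc 1 (a-1), 2 * ∑ j ∈ Icc (m*b/a+1) (b-1), (j:ℤ)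
      = ((b:ℤ)-1)*b - ((m*b/a : ℕ):ℤ) * ((m*b/a : ℕ):ℤ) - ((m*b/a : ℕ):ℤ) := by
    intro m hm
    have hle := hBmle m hm
    have h := gauss_sum' (m*b/a) (b-1) hle
    have hc : ((b-1 : ℕ):ℤ) = (b:ℤ) - 1 := by omega
    rw [hc] at h
    linear_combination h
  have hS0 : ∑ j ∈ Icc 1 (b-1), ((a*j/b : ℕ) : ℤ)
      = ∑ m ∈ Icc 1 (a-1), ((b:ℤ) - 1 - ((m*b/a : ℕ):ℤ)) := by
    rw [hswap0]
    exact Finset.sum_congr rfl hinner0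
  have hS1 : 2 * ∑ j ∈ Icc 1 (b-1), (j:ℤ) * ((a*j/b : ℕ) : ℤ)
      = ∑ m ∈ Icc 1 (a-1),
          (((b:ℤ)-1)*b - ((m*b/a : ℕ):ℤ) * ((m*b/a : ℕ):ℤ) - ((m*b/a : ℕ):ℤ)) := by
    rw [hswap1, Finset.mul_sum]
    exact Finset.sum_congr rfl hinner1
  -- step 3: arithmetic of m*b/a and m*r%a
  have hVr : ∀ m : ℕ, m*b % a = m*r % a := by
    intro m
    have h1 : m*b = m*r + (m*q)*a := by rw [hB]; ring
    rw [h1, Nat.add_mul_mod_self_right]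
  have hG : ∀ m : ℕ, (a:ℤ) * ((m*b/a : ℕ):ℤ) + ((m*r % a : ℕ):ℤ) = (m:ℤ)*(b:ℤ) := by
    intro m
    have h := Nat.div_add_mod (m*b) a
    rw [hVr m] at h
    exact_mod_cast h
  have hn1 : ∑ m ∈ Icc 1 (a-1), ((m*r % a : ℕ):ℤ) = ∑ m ∈ Icc 1 (a-1), (m:ℤ) :=
    perm_sum r a hcra ha1 (fun v => (v:ℤ))
  have hn2 : ∑ m ∈ Icc 1 (a-1), ((m*r % a : ℕ):ℤ)^2 = ∑ m ∈ Icc 1 (a-1), (m:ℤ)^2 :=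
    perm_sum r a hcra ha1 (fun v => (v:ℤ)^2)
  have hsumaG : (a:ℤ) * ∑ m ∈ Icc 1 (a-1), ((m*b/a : ℕ):ℤ)
      = (b:ℤ) * ∑ m ∈ Icc 1 (a-1), (m:ℤ) - ∑ m ∈ Icc 1 (a-1), (m:ℤ) := by
    rw [Finset.mul_sum]
    have hpt : ∀ m ∈ Icc 1 (a-1), (a:ℤ) * ((m*b/a : ℕ):ℤ)
        = (m:ℤ)*(b:ℤ) - ((m*r % a : ℕ):ℤ) := fun m _ => by linarith [hG m]
    rw [Finset.sum_congr rfl hpt, Finset.sum_sub_distrib, hn1, ← Finset.sum_mul, mul_comm]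
  have hsumaG2 : (a:ℤ)^2 * ∑ m ∈ Icc 1 (a-1), (((m*b/a : ℕ):ℤ) * ((m*b/a : ℕ):ℤ))
      = (b:ℤ)^2 * ∑ m ∈ Icc 1 (a-1), (m:ℤ)^2
        - 2*(b:ℤ) * (∑ m ∈ Icc 1 (a-1), (m:ℤ) * ((m*r % a : ℕ):ℤ))
        + ∑ m ∈ Icc 1 (a-1), (m:ℤ)^2 := by
    rw [Finset.mul_sum]
    have hpt : ∀ m ∈ Icc 1 (a-1), (a:ℤ)^2 * (((m*b/a : ℕ):ℤ) * ((m*b/a : ℕ):ℤ))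
        = (b:ℤ)^2*(m:ℤ)^2 - 2*(b:ℤ)*((m:ℤ) * ((m*r % a : ℕ):ℤ)) + ((m*r % a : ℕ):ℤ)^2 := by
      intro m _
      linear_combination ((a:ℤ)*((m*b/a : ℕ):ℤ) + (m:ℤ)*(b:ℤ) - ((m*r % a : ℕ):ℤ)) * hG m
    rw [Finset.sum_congr rfl hpt, Finset.sum_add_distrib, Finset.sum_sub_distrib, hn2,
        ← Finset.mul_sum, ← Finset.mul_sum]
  have hwm : ∀ m : ℕ, (a:ℤ) * ((m*r/a : ℕ):ℤ) + ((m*r % a : ℕ):ℤ) = (m:ℤ)*(r:ℤ) := by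
    intro m
    exact_mod_cast Nat.div_add_mod (m*r) a
  have hSMV : ∑ m ∈ Icc 1 (a-1), (m:ℤ) * ((m*r % a : ℕ):ℤ)
      = (r:ℤ) * ∑ m ∈ Icc 1 (a-1), (m:ℤ)^2
        - (a:ℤ) * ∑ m ∈ Icc 1 (a-1), (m:ℤ) * ((m*r/a : ℕ):ℤ) := by
    have hpt : ∀ m ∈ Icc 1 (a-1), (m:ℤ) * ((m*r % a : ℕ):ℤ)
        = (r:ℤ)*(m:ℤ)^2 - (a:ℤ)*((m:ℤ) * ((m*r/a : ℕ):ℤ)) :=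
      fun m _ => by linear_combination (m:ℤ) * (hwm m)
    rw [Finset.sum_congr rfl hpt, Finset.sum_sub_distrib, ← Finset.mul_sum, ← Finset.mul_sum]
  -- step 4: the inner staircase for m*r/a
  have hswapW := swap_sum r a hcra (by omega) ha1 (fun m => (m:ℤ))
  have hWints : ∑ m ∈ Icc 1 (a-1), (m:ℤ) * ((m*r/a : ℕ):ℤ)
      = ∑ e ∈ Icc 1 (r-1), ∑ m ∈ Icc (e*k+1) (a-1), (m:ℤ) := by
    have h1 : ∀ m ∈ Icc 1 (a-1), (m:ℤ) * ((m*r/a : ℕ):ℤ) = (m:ℤ) * ((r*m/a : ℕ):ℤ) := by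
      intro m _; rw [mul_comm m r]
    rw [Finset.sum_congr rfl h1, hswapW]
    refine Finset.sum_congr rfl fun e he => ?_
    simp only [mem_Icc] at he
    have h2 : e*a/r = e*k := by
      have h3 : e*a = e + (e*k)*r := by rw [hA]; ring
      rw [h3, Nat.add_mul_div_right _ _ (show 0 < r by omega), Nat.div_eq_of_lt (by omega)]
      omega
    rw [h2]
  have hekle : ∀ e ∈ Icc 1 (r-1), e*k ≤ a - 1 := by
    intro e he
    simp only [mem_Icc] at he
    have h1 : e*k ≤ (r-1)*k := Nat.mul_le_mul_right k he.2
    have h2 : (r-1)*k + k = r*k := by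
      have h0 : r - 1 + 1 = r := by omega
      calc (r-1)*k + k = ((r-1)+1)*k := by ring
        _ = r*k := by rw [h0]
    have h3 : k*r = r*k := mul_comm k r
    omega
  have hcard2 : (Icc 1 (r-1)).card = r - 1 := by simp
  have hcr1 : ((r-1 : ℕ):ℤ) = (r:ℤ) - 1 := by omega
  have hWval : 2 * ∑ m ∈ Icc 1 (a-1), (m:ℤ) * ((m*r/a : ℕ):ℤ)
      = ((r:ℤ)-1)*(((a:ℤ)-1)*(a:ℤ))
        - (k:ℤ)^2 * ∑ e ∈ Icc 1 (r-1), (e:ℤ)^2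
        - (k:ℤ) * ∑ e ∈ Icc 1 (r-1), (e:ℤ) := by
    rw [hWints, Finset.mul_sum]
    have hpt : ∀ e ∈ Icc 1 (r-1), 2 * ∑ m ∈ Icc (e*k+1) (a-1), (m:ℤ)
        = ((a:ℤ)-1)*(a:ℤ) - ((k:ℤ)^2*(e:ℤ)^2 + (k:ℤ)*(e:ℤ)) := by
      intro e he
      have h := gauss_sum' (e*k) (a-1) (hekle e he)
      have hc : ((a-1 : ℕ):ℤ) = (a:ℤ) - 1 := by omega
      rw [hc] at h
      push_cast at h
      linear_combination h
    rw [Finset.sum_congr rfl hpt, Finset.sum_sub_distrib, Finset.sum_add_distrib,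
        Finset.sum_const, hcard2, nsmul_eq_mul, hcr1, ← Finset.mul_sum, ← Finset.mul_sum]
    ring
  -- step 5: closed forms of Gauss sums
  have hn1v : 2 * ∑ m ∈ Icc 1 (a-1), (m:ℤ) = ((a:ℤ)-1)*(a:ℤ) := by
    have h := gauss_sum (a-1)
    have hc : ((a-1 : ℕ):ℤ) = (a:ℤ) - 1 := by omega
    rw [hc] at h
    linear_combination h
  have hn2v : 6 * ∑ m ∈ Icc 1 (a-1), (m:ℤ)^2 = ((a:ℤ)-1)*(a:ℤ)*(2*(a:ℤ)-1) := by
    have h := sq_sum (a-1)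
    have hc : ((a-1 : ℕ):ℤ) = (a:ℤ) - 1 := by omega
    rw [hc] at h
    linear_combination h
  have hE1v : 2 * ∑ e ∈ Icc 1 (r-1), (e:ℤ) = ((r:ℤ)-1)*(r:ℤ) := by
    have h := gauss_sum (r-1)
    rw [hcr1] at h
    linear_combination h
  have hE2v : 6 * ∑ e ∈ Icc 1 (r-1), (e:ℤ)^2 = ((r:ℤ)-1)*(r:ℤ)*(2*(r:ℤ)-1) := by
    have h := sq_sum (r-1)
    rw [hcr1] at h
    linear_combination h
  -- step 6: S0 and S1 in closed sum form
  have hcard1 : (Icc 1 (a-1)).card = a - 1 := by simp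
  have hca1 : ((a-1 : ℕ):ℤ) = (a:ℤ) - 1 := by omega
  have hS0p : ∑ j ∈ Icc 1 (b-1), ((a*j/b : ℕ) : ℤ)
      = ((a:ℤ)-1)*((b:ℤ)-1) - ∑ m ∈ Icc 1 (a-1), ((m*b/a : ℕ):ℤ) := by
    rw [hS0, Finset.sum_sub_distrib, Finset.sum_const, hcard1, nsmul_eq_mul, hca1]
  have hS1p : 2 * ∑ j ∈ Icc 1 (b-1), (j:ℤ) * ((a*j/b : ℕ) : ℤ)
      = ((a:ℤ)-1)*(((b:ℤ)-1)*(b:ℤ))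
        - ∑ m ∈ Icc 1 (a-1), (((m*b/a : ℕ):ℤ) * ((m*b/a : ℕ):ℤ))
        - ∑ m ∈ Icc 1 (a-1), ((m*b/a : ℕ):ℤ) := by
    rw [hS1]
    have hpt : ∀ m ∈ Icc 1 (a-1),
        ((b:ℤ)-1)*(b:ℤ) - ((m*b/a : ℕ):ℤ) * ((m*b/a : ℕ):ℤ) - ((m*b/a : ℕ):ℤ)
          = ((b:ℤ)-1)*(b:ℤ) - (((m*b/a : ℕ):ℤ) * ((m*b/a : ℕ):ℤ) + ((m*b/a : ℕ):ℤ)) :=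
      fun m _ => by ring
    rw [Finset.sum_congr rfl hpt, Finset.sum_sub_distrib, Finset.sum_add_distrib,
        Finset.sum_const, hcard1, nsmul_eq_mul, hca1]
    ring
  -- step 7: final assembly
  subst hB
  subst hA
  push_cast at hinv hS1p hS0p hsumaG2 hsumaG hSMV hWval hn1v hn2v hE1v hE2v
  have final : 8*((k:ℤ)*(r:ℤ)+1)^2 * (invNum (k*r+1) (q*(k*r+1)+r) : ℤ)
      = 2*((k:ℤ)*(r:ℤ)+1)^2 * ((q:ℤ)*(k:ℤ)*(r:ℤ)*((q:ℤ) + (r:ℤ) + (k:ℤ) + (q:ℤ)*(r:ℤ)*(k:ℤ))) := by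
      linear_combination (8*((k:ℤ)*(r:ℤ)+1)^2) * hinv
      + (12*((k:ℤ)*(r:ℤ)+1)^2) * hS1p
      - (8*((k:ℤ)*(r:ℤ)+1)^2*(2*((q:ℤ)*((k:ℤ)*(r:ℤ)+1)+(r:ℤ))-1)) * hS0p
      - 12 * hsumaG2
      + ((16*((q:ℤ)*((k:ℤ)*(r:ℤ)+1)+(r:ℤ))-20)*((k:ℤ)*(r:ℤ)+1)) * hsumaG
      + (24*((q:ℤ)*((k:ℤ)*(r:ℤ)+1)+(r:ℤ))) * hSMV
      - (12*((k:ℤ)*(r:ℤ)+1)*((q:ℤ)*((k:ℤ)*(r:ℤ)+1)+(r:ℤ))) * hWval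
      + (((k:ℤ)*(r:ℤ)+1)*(8*((q:ℤ)*((k:ℤ)*(r:ℤ)+1)+(r:ℤ))-10)*(((q:ℤ)*((k:ℤ)*(r:ℤ)+1)+(r:ℤ))-1)) * hn1v
      - (2+2*((q:ℤ)*((k:ℤ)*(r:ℤ)+1)+(r:ℤ))^2-4*((q:ℤ)*((k:ℤ)*(r:ℤ)+1)+(r:ℤ))*(r:ℤ)) * hn2v
      + (6*((k:ℤ)*(r:ℤ)+1)*((q:ℤ)*((k:ℤ)*(r:ℤ)+1)+(r:ℤ))*(k:ℤ)) * hE1v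
      + (2*((k:ℤ)*(r:ℤ)+1)*((q:ℤ)*((k:ℤ)*(r:ℤ)+1)+(r:ℤ))*(k:ℤ)^2) * hE2v
  have hane : ((k:ℤ)*(r:ℤ)+1)^2 ≠ 0 := by positivity
  have hcancel : 8 * (invNum (k*r+1) (q*(k*r+1)+r) : ℤ)
      = 2 * ((q:ℤ)*(k:ℤ)*(r:ℤ)*((q:ℤ) + (r:ℤ) + (k:ℤ) + (q:ℤ)*(r:ℤ)*(k:ℤ))) := by
    have h2 := mul_left_cancel₀ hane
      (show ((k:ℤ)*(r:ℤ)+1)^2 * (8 * (invNum (k*r+1) (q*(k*r+1)+r) : ℤ))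
        = ((k:ℤ)*(r:ℤ)+1)^2 * (2 * ((q:ℤ)*(k:ℤ)*(r:ℤ)*((q:ℤ) + (r:ℤ) + (k:ℤ) + (q:ℤ)*(r:ℤ)*(k:ℤ))))
      from by linear_combination final)
    exact h2
  have hfinZ : (4 * invNum (k*r+1) (q*(k*r+1)+r) : ℤ)
      = ((q*k*r*(q + r + k + q*r*k) : ℕ) : ℤ) := by
    push_cast
    linarith
  exact_mod_cast hfinZ


theorem stmt18 (b a₁ a₂ r s : ℕ) (hb : 2 ≤ b)
    (h₁ : Nat.Coprime a₁ b) (h₂ : Nat.Coprime a₂ b)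
    (ha₁ : 1 ≤ a₁) (ha₁' : a₁ ≤ b - 1) (ha₂ : 1 ≤ a₂) (ha₂' : a₂ ≤ b - 1)
    (hr₁ : b % a₁ = r) (hr₂ : b % a₂ = r)
    (hs₁ : a₁ % r = s) (hs₂ : a₂ % r = s)
    (hone₁ : a₁ % r = 1) (hone₂ : a₂ % r = 1)
    (hinv : invNum a₁ b = invNum a₂ b) :
    a₁ = a₂ := by
  rcases Nat.eq_zero_or_pos r with hr0 | hrpos
  · subst hr0
    rw [Nat.mod_zero] at hone₁ hone₂
    omega
  rcases eq_or_lt_of_le (show 1 ≤ r from hrpos) with hr1 | hr2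
  · rw [← hr1, Nat.mod_one] at hone₁
    omega
  -- now 2 ≤ r
  have hr : 2 ≤ r := hr2
  have hra1 : r < a₁ := hr₁ ▸ Nat.mod_lt b (by omega)
  have hra2 : r < a₂ := hr₂ ▸ Nat.mod_lt b (by omega)
  -- decompose a₁, a₂, b
  have hk₁ := Nat.div_add_mod a₁ r
  rw [hone₁] at hk₁
  have hk₂ := Nat.div_add_mod a₂ r
  rw [hone₂] at hk₂
  have hq₁ := Nat.div_add_mod b a₁
  rw [hr₁] at hq₁
  have hq₂ := Nat.div_add_mod b a₂
  rw [hr₂] at hq₂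
  set k₁ := a₁ / r with hk₁d
  set k₂ := a₂ / r with hk₂d
  set q₁ := b / a₁ with hq₁d
  set q₂ := b / a₂ with hq₂d
  have hA₁ : a₁ = k₁ * r + 1 := by rw [mul_comm]; omega
  have hA₂ : a₂ = k₂ * r + 1 := by rw [mul_comm]; omega
  have hB₁ : b = q₁ * a₁ + r := by rw [mul_comm]; omega
  have hB₂ : b = q₂ * a₂ + r := by rw [mul_comm]; omega
  have hk₁1 : 1 ≤ k₁ := by
    rcases Nat.eq_zero_or_pos k₁ with h0 | h1
    · rw [h0] at hA₁; simp at hA₁; omega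
    · exact h1
  have hk₂1 : 1 ≤ k₂ := by
    rcases Nat.eq_zero_or_pos k₂ with h0 | h1
    · rw [h0] at hA₂; simp at hA₂; omega
    · exact h1
  have hq₁1 : 1 ≤ q₁ := by
    rw [hq₁d]
    rw [Nat.one_le_div_iff (by omega)]
    omega
  have hq₂1 : 1 ≤ q₂ := by
    rw [hq₂d]
    rw [Nat.one_le_div_iff (by omega)]
    omega
  have hf₁ : 4 * invNum a₁ b = q₁*k₁*r*(q₁ + r + k₁ + q₁*r*k₁) := by
    have := formula q₁ r k₁ a₁ b hA₁ hB₁ hq₁1 hr hk₁1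
    exact this
  have hf₂ : 4 * invNum a₂ b = q₂*k₂*r*(q₂ + r + k₂ + q₂*r*k₂) := by
    have := formula q₂ r k₂ a₂ b hA₂ hB₂ hq₂1 hr hk₂1
    exact this
  have hg : q₁*k₁*r*(q₁ + r + k₁ + q₁*r*k₁) = q₂*k₂*r*(q₂ + r + k₂ + q₂*r*k₂) := by
    omega
  -- rewrite both sides via M_i = q_i*k_i*r
  have hM₁ : q₁*k₁*r*(q₁ + r + k₁ + q₁*r*k₁)
      = (q₁*k₁*r)*((q₁*k₁*r) + q₁ + r + k₁) := by ring
  have hM₂ : q₂*k₂*r*(q₂ + r + k₂ + q₂*r*k₂)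
      = (q₂*k₂*r)*((q₂*k₂*r) + q₂ + r + k₂) := by ring
  have hN : q₁*k₁*r + q₁ = q₂*k₂*r + q₂ := by
    have e1 : q₁ * a₁ = q₁*k₁*r + q₁ := by rw [hA₁]; ring
    have e2 : q₂ * a₂ = q₂*k₂*r + q₂ := by rw [hA₂]; ring
    omega
  -- strict monotonicity kills both strict cases
  have main : ∀ (x₁ x₂ y₁ y₂ : ℕ), 1 ≤ x₁ → 1 ≤ x₂ → 1 ≤ y₁ → 1 ≤ y₂ →
      y₁ < y₂ →
      x₁*y₁*r + x₁ = x₂*y₂*r + x₂ →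
      (x₁*y₁*r)*((x₁*y₁*r) + x₁ + r + y₁) < (x₂*y₂*r)*((x₂*y₂*r) + x₂ + r + y₂) := by
    intro x₁ x₂ y₁ y₂ hx₁ hx₂ hy₁ hy₂ hylt hNN
    have e₁ : x₁*(y₁*r+1) = x₁*y₁*r + x₁ := by ring
    have e₂ : x₂*(y₂*r+1) = x₂*y₂*r + x₂ := by ring
    have hxlt : x₂ < x₁ := by
      by_contra hcon
      push_neg at hcon
      have h1 : x₁*(y₁*r+1) ≤ x₂*(y₁*r+1) := Nat.mul_le_mul_right _ hcon
      have h2 : x₂*(y₁*r+1) < x₂*(y₂*r+1) := by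
        apply mul_lt_mul_of_pos_left _ (show 0 < x₂ by omega)
        have : y₁*r < y₂*r := Nat.mul_lt_mul_of_lt_of_le hylt (le_refl r) (by omega)
        omega
      omega
    have hMlt : x₁*y₁*r < x₂*y₂*r := by omega
    have hXlt : (x₁*y₁*r) + x₁ + r + y₁ < (x₂*y₂*r) + x₂ + r + y₂ := by omega
    exact Nat.mul_lt_mul_of_lt_of_le hMlt (le_of_lt hXlt) (by omega)
  rcases lt_trichotomy a₁ a₂ with hlt | heq | hgt
  · exfalso
    have hklt : k₁ < k₂ := by
      by_contra hcon
      push_neg at hcon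
      have : k₂ * r ≤ k₁ * r := Nat.mul_le_mul_right r hcon
      omega
    have := main q₁ q₂ k₁ k₂ hq₁1 hq₂1 hk₁1 hk₂1 hklt hN
    omega
  · exact heq
  · exfalso
    have hklt : k₂ < k₁ := by
      by_contra hcon
      push_neg at hcon
      have : k₁ * r ≤ k₂ * r := Nat.mul_le_mul_right r hcon
      omega
    have := main q₂ q₁ k₂ k₁ hq₂1 hq₁1 hk₂1 hk₁1 hklt hN.symm
    omega
end

section
/- For b ≥ 1 and any a coprime to b, the Dedekind sum satisfies -(b-1)(b-2)/(12b) ≤ s(a,b) ≤ (b-1)(b-2)/(12b), with the maximum attained exactly at a ≡ 1 (mod b) and the minimum exactly at a ≡ -1 (mod b). -/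
lemma saw_eq (q b : ℕ) (hb : 0 < b) (hnd : ¬ b ∣ q) :
    sawtooth ((q:ℚ)/b) = ((q % b : ℕ):ℚ)/b - 1/2 := by
  have hbq : (0:ℚ) < b := by exact_mod_cast hb
  have hr0 : q % b ≠ 0 := fun h0 => hnd (Nat.dvd_of_mod_eq_zero h0)
  have hrlt : q % b < b := Nat.mod_lt _ hb
  have hq : (q:ℚ) = b * ((q/b : ℕ):ℚ) + ((q % b : ℕ):ℚ) := by
    exact_mod_cast congrArg (Nat.cast : ℕ → ℚ) (Nat.div_add_mod q b).symm
  have hx : (q:ℚ)/b = ((q/b : ℕ):ℚ) + ((q % b : ℕ):ℚ)/b := by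
    rw [hq]; field_simp
  have hden : ((q:ℚ)/b).den ≠ 1 := by
    intro hd
    have hnum : ((((q:ℚ)/b).num : ℚ)) = (q:ℚ)/b := Rat.den_eq_one_iff _ |>.mp hd
    have : (q:ℚ) = (((q:ℚ)/b).num : ℚ) * b := by rw [hnum]; field_simp
    have hz : (q:ℤ) = ((q:ℚ)/b).num * b := by exact_mod_cast this
    exact hnd (by exact_mod_cast (Dvd.intro _ (by linarith : b * ((q:ℚ)/b).num = q) : (b:ℤ) ∣ (q:ℤ)))
  have hfrac : (0:ℚ) ≤ ((q % b : ℕ):ℚ)/b ∧ ((q % b : ℕ):ℚ)/b < 1 := by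
    constructor
    · positivity
    · rw [div_lt_one hbq]; exact_mod_cast hrlt
  have hfloor : ⌊(q:ℚ)/b⌋ = (q/b : ℕ) := by
    rw [hx, Int.floor_natCast_add, Int.floor_eq_zero_iff.mpr (by rw [Set.mem_Ico]; exact hfrac)]
    simp
  rw [sawtooth, if_neg hden, hfloor, Int.cast_natCast, hx]
  ring

lemma sumIcc1 (n : ℕ) : ∑ i ∈ Finset.Icc 1 n, (i:ℚ) = n*(n+1)/2 := by
  induction n with
  | zero => simp
  | succ n ih => rw [Finset.sum_Icc_succ_top (Nat.le_add_left 1 n), ih]; push_cast; ring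

lemma sumIcc2 (n : ℕ) : ∑ i ∈ Finset.Icc 1 n, (i:ℚ)^2 = n*(n+1)*(2*n+1)/6 := by
  induction n with
  | zero => simp
  | succ n ih => rw [Finset.sum_Icc_succ_top (Nat.le_add_left 1 n), ih]; push_cast; ring

theorem stmt19 (a b : ℕ) (hb : 1 ≤ b) (h : Nat.Coprime a b) :
    (-(((b : ℚ) - 1) * ((b : ℚ) - 2) / (12 * b)) ≤ dedekindSum a b ∧
      dedekindSum a b ≤ ((b : ℚ) - 1) * ((b : ℚ) - 2) / (12 * b)) ∧
    (dedekindSum a b = ((b : ℚ) - 1) * ((b : ℚ) - 2) / (12 * b) ↔ a % b = 1 % b) ∧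
    (dedekindSum a b = -(((b : ℚ) - 1) * ((b : ℚ) - 2) / (12 * b)) ↔ (a + 1) % b = 0) := by
  rcases eq_or_lt_of_le hb with h1 | hb2
  · -- b = 1
    simp [dedekindSum, ← h1, Nat.mod_one]
  -- b ≥ 2
  have hb2 : 2 ≤ b := hb2
  have hbpos : 0 < b := hb
  have hbq : (0:ℚ) < b := by exact_mod_cast hbpos
  have hbq0 : (b:ℚ) ≠ 0 := ne_of_gt hbq
  set s : Finset ℕ := Finset.Icc 1 (b-1) with hs
  set f : ℕ → ℕ := fun i => a * i % b with hf
  have hcast : ((b - 1 : ℕ) : ℚ) = (b:ℚ) - 1 := by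
    push_cast [Nat.cast_sub hb]; ring
  -- membership
  have hmem : ∀ i ∈ s, f i ∈ s := by
    intro i hi
    rw [hs, Finset.mem_Icc] at hi ⊢
    have hib : i < b := lt_of_le_of_lt hi.2 (by omega)
    have hnd : ¬ b ∣ a * i := by
      intro hd
      have hdi := (Nat.Coprime.dvd_of_dvd_mul_left (Nat.coprime_comm.mp h) hd)
      have := Nat.le_of_dvd (by omega) hdi
      omega
    have h0 : f i ≠ 0 := fun h0 => hnd (Nat.dvd_of_mod_eq_zero h0)
    have hlt : f i < b := Nat.mod_lt _ hbpos
    omega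
  have hinj : ∀ x ∈ s, ∀ y ∈ s, f x = f y → x = y := by
    intro x hx y hy hxy
    rw [hs, Finset.mem_Icc] at hx hy
    have hxb : x < b := by omega
    have hyb : y < b := by omega
    have hmeq : a * x ≡ a * y [MOD b] := hxy
    have := (Nat.ModEq.cancel_left_of_coprime (by rwa [Nat.Coprime, Nat.gcd_comm] at h) hmeq)
    rw [Nat.ModEq, Nat.mod_eq_of_lt hxb, Nat.mod_eq_of_lt hyb] at this
    exact this
  have himg : Finset.image f s = s := by
    apply Finset.eq_of_subset_of_card_le
    · intro j hj
      obtain ⟨i, hi, rfl⟩ := Finset.mem_image.mp hj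
      exact hmem i hi
    · rw [Finset.card_image_of_injOn hinj]
  have hperm : ∀ g : ℕ → ℚ, ∑ i ∈ s, g (f i) = ∑ j ∈ s, g j := by
    intro g
    conv_rhs => rw [← himg]
    exact (Finset.sum_image hinj).symm
  have hsaw : ∀ i ∈ s, sawtooth ((a*i : ℕ)/(b:ℚ)) = ((f i : ℕ):ℚ)/b - 1/2 := by
    intro i hi
    rw [hs, Finset.mem_Icc] at hi
    have hnd : ¬ b ∣ a * i := by
      intro hd
      have hdi := (Nat.Coprime.dvd_of_dvd_mul_left (Nat.coprime_comm.mp h) hd)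
      have := Nat.le_of_dvd (by omega) hdi
      omega
    have := saw_eq (a*i) b hbpos hnd
    rw [hf]
    push_cast at this ⊢
    exact this
  set S : ℚ := ∑ i ∈ s, (i:ℚ) * (f i : ℚ) with hS
  have hsum1 : ∑ i ∈ s, (i:ℚ) = ((b:ℚ)-1)*b/2 := by
    rw [hs, sumIcc1, hcast]; ring
  have hsum2 : ∑ i ∈ s, (i:ℚ)^2 = ((b:ℚ)-1)*b*(2*b-1)/6 := by
    rw [hs, sumIcc2, hcast]; ring
  have hsumf1 : ∑ i ∈ s, (f i:ℚ) = ((b:ℚ)-1)*b/2 :=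
    (hperm (fun n => (n:ℚ))).trans hsum1
  have hsumf2 : ∑ i ∈ s, (f i:ℚ)^2 = ((b:ℚ)-1)*b*(2*b-1)/6 :=
    (hperm (fun n => (n:ℚ)^2)).trans hsum2
  have hcard : (s.card : ℚ) = (b:ℚ) - 1 := by
    rw [hs, Nat.card_Icc, Nat.add_sub_cancel]; exact hcast
  have hded : dedekindSum a b = S / b^2 - ((b:ℚ) - 1)/4 := by
    rw [dedekindSum, ← hs]
    rw [Finset.sum_congr rfl (fun i hi => by rw [hsaw i hi])]
    have he : ∀ i ∈ s, (i:ℚ)/b * ((f i : ℚ)/b - 1/2) = (i:ℚ)*(f i:ℚ)/b^2 - (i:ℚ)/(2*b) := by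
      intro i _; field_simp
    rw [Finset.sum_congr rfl he, Finset.sum_sub_distrib, ← Finset.sum_div, ← Finset.sum_div,
      hsum1, ← hS]
    field_simp
    ring
  have key1 : ∑ i ∈ s, ((i:ℚ) - (f i:ℚ))^2 = 2*(((b:ℚ)-1)*b*(2*b-1)/6) - 2*S := by
    have expand : ∀ i ∈ s, ((i:ℚ) - (f i:ℚ))^2
        = ((i:ℚ)^2 + (f i:ℚ)^2) - 2*((i:ℚ)*(f i:ℚ)) := fun i _ => by ring
    rw [Finset.sum_congr rfl expand, Finset.sum_sub_distrib, Finset.sum_add_distrib,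
      ← Finset.mul_sum, hsum2, hsumf2, ← hS]
    ring
  have key2 : ∑ i ∈ s, ((i:ℚ) + (f i:ℚ) - b)^2
      = 2*(((b:ℚ)-1)*b*(2*b-1)/6) + 2*S - b^2*((b:ℚ)-1) := by
    have expand : ∀ i ∈ s, ((i:ℚ) + (f i:ℚ) - b)^2
        = (((i:ℚ)^2 + (f i:ℚ)^2) + 2*((i:ℚ)*(f i:ℚ))) - (2*(b:ℚ)*(i:ℚ) + 2*(b:ℚ)*(f i:ℚ))
          + (b:ℚ)^2 := fun i _ => by ring
    rw [Finset.sum_congr rfl expand]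
    simp only [Finset.sum_add_distrib, Finset.sum_sub_distrib, ← Finset.mul_sum,
      Finset.sum_const, nsmul_eq_mul]
    rw [hcard, hsum1, hsumf1, hsum2, hsumf2, ← hS]
    ring
  have hnn1 : (0:ℚ) ≤ ∑ i ∈ s, ((i:ℚ) - (f i:ℚ))^2 :=
    Finset.sum_nonneg fun i _ => sq_nonneg _
  have hnn2 : (0:ℚ) ≤ ∑ i ∈ s, ((i:ℚ) + (f i:ℚ) - b)^2 :=
    Finset.sum_nonneg fun i _ => sq_nonneg _
  have hub : dedekindSum a b - ((b:ℚ)-1)*((b:ℚ)-2)/(12*b)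
      = -((∑ i ∈ s, ((i:ℚ) - (f i:ℚ))^2)/(2*b^2)) := by
    rw [hded, key1]; field_simp; ring
  have hlb : dedekindSum a b + ((b:ℚ)-1)*((b:ℚ)-2)/(12*b)
      = (∑ i ∈ s, ((i:ℚ) + (f i:ℚ) - b)^2)/(2*b^2) := by
    rw [hded, key2]; field_simp; ring
  have hb2q : (0:ℚ) < 2*(b:ℚ)^2 := by positivity
  constructor
  · constructor
    · have := div_nonneg hnn2 (le_of_lt hb2q)
      linarith
    · have := div_nonneg hnn1 (le_of_lt hb2q)
      linarith
  have hone : 1 ∈ s := by rw [hs, Finset.mem_Icc]; omega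
  constructor
  · -- max iff
    rw [show (dedekindSum a b = ((b:ℚ)-1)*((b:ℚ)-2)/(12*b)) ↔
        (dedekindSum a b - ((b:ℚ)-1)*((b:ℚ)-2)/(12*b) = 0) from sub_eq_zero.symm]
    rw [hub, neg_eq_zero, div_eq_zero_iff]
    simp only [ne_of_gt hb2q, or_false]
    rw [Finset.sum_eq_zero_iff_of_nonneg (fun i _ => sq_nonneg _)]
    constructor
    · intro hz
      have h1 : f 1 = 1 := by
        have := hz 1 hone
        rw [sq_eq_zero_iff, sub_eq_zero] at this
        exact_mod_cast this.symm
      have : a % b = 1 := by simpa [hf] using h1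
      rw [this, Nat.mod_eq_of_lt hb2]
    · intro ha i hi
      have ha1 : a % b = 1 := by rwa [Nat.mod_eq_of_lt hb2] at ha
      rw [hs, Finset.mem_Icc] at hi
      have : f i = i := by
        rw [hf]; simp only
        rw [Nat.mul_mod, ha1, Nat.mod_eq_of_lt (show i < b by omega), one_mul]
        exact Nat.mod_eq_of_lt (by omega)
      rw [this, sub_self]
      ring
  · -- min iff
    rw [show (dedekindSum a b = -(((b:ℚ)-1)*((b:ℚ)-2)/(12*b))) ↔
        (dedekindSum a b + ((b:ℚ)-1)*((b:ℚ)-2)/(12*b) = 0) from by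
          constructor <;> intro hh <;> linarith]
    rw [hlb, div_eq_zero_iff]
    simp only [ne_of_gt hb2q, or_false]
    rw [Finset.sum_eq_zero_iff_of_nonneg (fun i _ => sq_nonneg _)]
    constructor
    · intro hz
      have h1 : f 1 = b - 1 := by
        have := hz 1 hone
        rw [sq_eq_zero_iff, sub_eq_zero] at this
        have : (1:ℚ) + (f 1 : ℚ) = b := by push_cast at this ⊢; linarith
        have hn : 1 + f 1 = b := by exact_mod_cast this
        omega
      have ha1 : a % b = b - 1 := by simpa [hf] using h1
      rw [Nat.add_mod, ha1, Nat.mod_eq_of_lt (show 1 < b from hb2)]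
      simp [Nat.sub_add_cancel hb]
    · intro ha i hi
      rw [hs, Finset.mem_Icc] at hi
      have ha1 : a % b = b - 1 := by
        have hmod : a % b < b := Nat.mod_lt _ hbpos
        have : (a % b + 1 % b) % b = 0 := by rw [← Nat.add_mod]; exact ha
        rw [Nat.mod_eq_of_lt (show 1 < b from hb2)] at this
        rcases Nat.lt_or_ge (a % b + 1) b with hlt | hge
        · rw [Nat.mod_eq_of_lt hlt] at this; omega
        · have : a % b + 1 = b := by omega
          omega
      have hfi : f i = b - i := by
        rw [hf]; simp only
        rw [Nat.mul_mod, ha1, Nat.mod_eq_of_lt (show i < b by omega)]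
        have hrw : (b-1) * i = b * (i-1) + (b - i) := by
          cases' Nat.exists_eq_add_of_le hi.1 with k hk
          subst hk
          have : k ≤ b - 2 := by omega
          zify [show (1:ℕ) ≤ b by omega, show 1+k ≤ b by omega, show 1 ≤ 1 + k by omega]
          ring
        rw [hrw, Nat.mul_add_mod]
        exact Nat.mod_eq_of_lt (by omega)
      rw [hfi]
      have : ((b - i : ℕ):ℚ) = (b:ℚ) - i := by
        push_cast [Nat.cast_sub (by omega : i ≤ b)]; ring
      rw [this]
      ring
end
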